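/- arXiv:2211.00954 — 9 statements merged into one kernel-verified Lean document; each statement's English description precedes it below -/
import Mathlib

section
/- Let C be the middle-third Cantor set. Then {1/x₁ + 1/x₂ + 1/x₃ + 1/x₄ : x₁, x₂, x₃ ∈ C ∩ [2/9, 1/3], x₄ ∈ C ∩ [2/3, 1]} = [10, 15]. -/
open Set

namespace CRC

lemma cantor_div3 {x : ℝ} (hx : x ∈ cantorSet) : x / 3 ∈ cantorSet := by
  rw [cantorSet, Set.mem_iInter]
  intro n
  cases n with
  | zero =>
    have h01 := cantorSet_subset_unitInterval hx
    simp only [preCantorSet_zero, Set.mem_Icc] at *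
    constructor <;> [linarith [h01.1]; linarith [h01.2]]
  | succ n =>
    exact Or.inl ⟨x, (Set.mem_iInter.mp hx n), rfl⟩

lemma cantor_add2_div3 {x : ℝ} (hx : x ∈ cantorSet) : (2 + x) / 3 ∈ cantorSet := by
  rw [cantorSet, Set.mem_iInter]
  intro n
  cases n with
  | zero =>
    have h01 := cantorSet_subset_unitInterval hx
    simp only [preCantorSet_zero, Set.mem_Icc] at *
    constructor <;> [linarith [h01.1]; linarith [h01.2]]
  | succ n =>
    exact Or.inr ⟨x, (Set.mem_iInter.mp hx n), rfl⟩

def cdig (d : Bool) : ℝ := if d then 2 else 0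

lemma cdig_nonneg (d : Bool) : 0 ≤ cdig d := by cases d <;> simp [cdig]
lemma cdig_le_two (d : Bool) : cdig d ≤ 2 := by cases d <;> simp [cdig]

noncomputable def csum : List Bool → ℝ
  | [] => 0
  | d :: t => (cdig d + csum t) / 3

@[simp] lemma csum_nil : csum [] = 0 := rfl
lemma csum_cons (d : Bool) (t : List Bool) : csum (d :: t) = (cdig d + csum t) / 3 := rfl

lemma csum_nonneg (l : List Bool) : 0 ≤ csum l := by
  induction l with
  | nil => simp
  | cons d t ih => rw [csum_cons]; have := cdig_nonneg d; positivity

lemma csum_le (l : List Bool) : csum l ≤ 1 - (1/3 : ℝ) ^ l.length := by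
  induction l with
  | nil => simp
  | cons d t ih =>
    rw [csum_cons]
    have := cdig_le_two d
    simp only [List.length_cons]
    rw [pow_succ]
    linarith

lemma csum_mem (l : List Bool) : csum l ∈ cantorSet := by
  induction l with
  | nil => exact zero_mem_cantorSet
  | cons d t ih =>
    rw [csum_cons]
    cases d with
    | false => simpa [cdig] using cantor_div3 ih
    | true => exact cantor_add2_div3 ih

lemma csum_append (l : List Bool) (d : Bool) :
    csum (l ++ [d]) = csum l + cdig d / 3 ^ (l.length + 1) := by
  induction l with
  | nil => simp [csum_cons]
  | cons d' t ih =>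
    simp only [List.cons_append, csum_cons, ih, List.length_cons]
    rw [pow_succ]
    ring

end CRC
namespace CRC

section Ineq
variable {x h : ℝ} (h0 : 0 < h) (hx : 2 * h ≤ x)

include h0 hx

lemma gap_le_half : 1/(x+h/3) - 1/(x+2*h/3) ≤ (1/x - 1/(x+h))/2 := by
  have hx0 : 0 < x := by linarith
  have e1 : 1/(x+h/3) - 1/(x+2*h/3) = (3*h)/((3*x+h)*(3*x+2*h)) := by
    field_simp; try ring
  have e2 : (1/x - 1/(x+h))/2 = h/(x*(x+h)*2) := by field_simp; try ring
  rw [e1, e2, div_le_div_iff₀ (by positivity) (by positivity)]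
  nlinarith [mul_nonneg (mul_nonneg h0.le hx0.le) hx0.le,
    mul_nonneg (mul_nonneg h0.le h0.le) hx0.le,
    mul_nonneg (mul_nonneg h0.le h0.le) h0.le]

lemma gap_ge : (2/9) * (1/x - 1/(x+h)) ≤ 1/(x+h/3) - 1/(x+2*h/3) := by
  have hx0 : 0 < x := by linarith
  have e1 : 1/(x+h/3) - 1/(x+2*h/3) = (3*h)/((3*x+h)*(3*x+2*h)) := by
    field_simp; try ring
  have e2 : (2/9) * (1/x - 1/(x+h)) = (2*h)/(x*(x+h)*9) := by field_simp; try ring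
  rw [e1, e2, div_le_div_iff₀ (by positivity) (by positivity)]
  nlinarith [mul_nonneg h0.le (mul_nonneg (by linarith : (0:ℝ) ≤ 3*x - 2*h)
    (by linarith : (0:ℝ) ≤ 3*x + 2*h)), mul_nonneg (mul_nonneg h0.le h0.le) hx0.le]

lemma childL_ge : (1/x - 1/(x+h))/4 ≤ 1/x - 1/(x+h/3) := by
  have hx0 : 0 < x := by linarith
  have e1 : 1/x - 1/(x+h/3) = h/(x*(3*x+h)) := by rw [eq_div_iff (by positivity)]; field_simp; ring
  have e2 : (1/x - 1/(x+h))/4 = h/(x*(x+h)*4) := by field_simp; try ring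
  rw [e1, e2, div_le_div_iff₀ (by positivity) (by positivity)]
  nlinarith [mul_nonneg (mul_nonneg h0.le hx0.le) hx0.le,
    mul_nonneg (mul_nonneg h0.le h0.le) hx0.le]

lemma childR_ge : (1/x - 1/(x+h))/4 ≤ 1/(x+2*h/3) - 1/(x+h) := by
  have hx0 : 0 < x := by linarith
  have e1 : 1/(x+2*h/3) - 1/(x+h) = (3*h)/((3*x+2*h)*(3*(x+h))) := by field_simp; try ring
  have e2 : (1/x - 1/(x+h))/4 = h/(x*(x+h)*4) := by field_simp; try ring
  rw [e1, e2, div_le_div_iff₀ (by positivity) (by positivity)]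
  nlinarith [mul_nonneg (mul_nonneg h0.le (by linarith : (0:ℝ) ≤ x + h))
    (by linarith : (0:ℝ) ≤ x - 2*h)]

end Ineq

end CRC
namespace CRC

noncomputable def Hc : Fin 4 → ℝ
  | 0 => 1/9
  | 1 => 1/9
  | 2 => 1/9
  | 3 => 1/3

lemma Hc_pos (i : Fin 4) : 0 < Hc i := by
  fin_cases i <;> norm_num [Hc]

noncomputable def pxf (i : Fin 4) (l : List Bool) : ℝ := Hc i * (2 + csum l)
noncomputable def phf (i : Fin 4) (l : List Bool) : ℝ := Hc i / 3 ^ l.length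
noncomputable def Lf (i : Fin 4) (l : List Bool) : ℝ :=
  1 / pxf i l - 1 / (pxf i l + phf i l)

lemma phf_pos (i : Fin 4) (l : List Bool) : 0 < phf i l := by
  have := Hc_pos i; unfold phf; positivity

lemma pxf_ge (i : Fin 4) (l : List Bool) : 2 * Hc i ≤ pxf i l := by
  have h1 := csum_nonneg l
  have h2 := (Hc_pos i).le
  unfold pxf; nlinarith

lemma pxf_pos (i : Fin 4) (l : List Bool) : 0 < pxf i l :=
  lt_of_lt_of_le (by have := Hc_pos i; linarith) (pxf_ge i l)

lemma two_phf_le_pxf (i : Fin 4) (l : List Bool) : 2 * phf i l ≤ pxf i l := by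
  have h1 : phf i l ≤ Hc i := by
    unfold phf
    rw [div_le_iff₀ (by positivity)]
    nlinarith [Hc_pos i, one_le_pow₀ (by norm_num : (1:ℝ) ≤ 3) (n := l.length)]
  linarith [pxf_ge i l]

lemma pxf_add_phf_le (i : Fin 4) (l : List Bool) : pxf i l + phf i l ≤ 3 * Hc i := by
  have h1 := csum_le l
  have h2 := Hc_pos i
  have h3 : phf i l = Hc i * (1/3 : ℝ) ^ l.length := by
    unfold phf; rw [div_pow, one_pow]; ring
  unfold pxf
  rw [h3]
  nlinarith [pow_pos (by norm_num : (0:ℝ) < 1/3) l.length]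

lemma Lf_nonneg (i : Fin 4) (l : List Bool) : 0 ≤ Lf i l := by
  unfold Lf
  have := pxf_pos i l
  have := phf_pos i l
  have : 1/(pxf i l + phf i l) ≤ 1/pxf i l :=
    one_div_le_one_div_of_le (by linarith) (by linarith)
  linarith

abbrev St := Fin 4 → List Bool

noncomputable def lowS (s : St) : ℝ := ∑ i, 1 / (pxf i (s i) + phf i (s i))
noncomputable def highS (s : St) : ℝ := ∑ i, 1 / pxf i (s i)
noncomputable def SL (s : St) : ℝ := ∑ i, Lf i (s i)

lemma SL_eq (s : St) : SL s = highS s - lowS s := by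
  unfold SL highS lowS Lf
  rw [← Finset.sum_sub_distrib]

noncomputable def imax (s : St) : Fin 4 :=
  Classical.choose (Finite.exists_max (fun i => Lf i (s i)))

lemma imax_spec (s : St) (j : Fin 4) : Lf j (s j) ≤ Lf (imax s) (s (imax s)) :=
  Classical.choose_spec (Finite.exists_max (fun i => Lf i (s i))) j

open Classical in
noncomputable def step (y : ℝ) (s : St) : St :=
  let i := imax s
  let x := pxf i (s i)
  let h := phf i (s i)
  if lowS s - 1/(x+h) + 1/(x+h/3) ≤ y then Function.update s i (s i ++ [false])
  else Function.update s i (s i ++ [true])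

noncomputable def seq (y : ℝ) : ℕ → St
  | 0 => fun _ => []
  | n+1 => step y (seq y n)

-- effect of appending a digit
lemma pxf_append_false (i : Fin 4) (l : List Bool) : pxf i (l ++ [false]) = pxf i l := by
  unfold pxf; rw [csum_append]; simp [cdig]

lemma pxf_append_true (i : Fin 4) (l : List Bool) :
    pxf i (l ++ [true]) = pxf i l + 2 * phf i l / 3 := by
  unfold pxf phf
  rw [csum_append]
  simp only [cdig, if_true]
  rw [pow_succ]
  field_simp
  ring

lemma phf_append (i : Fin 4) (l : List Bool) (d : Bool) :
    phf i (l ++ [d]) = phf i l / 3 := by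
  unfold phf
  simp only [List.length_append, List.length_cons, List.length_nil]
  rw [pow_succ, div_div]

lemma sum_eq_of_eq_on {u v : Fin 4 → ℝ} {i : Fin 4} (h : ∀ j, j ≠ i → u j = v j) :
    ∑ j, u j = (∑ j, v j) - v i + u i := by
  rw [← Finset.add_sum_erase _ u (Finset.mem_univ i),
      ← Finset.add_sum_erase _ v (Finset.mem_univ i)]
  have he : ∑ j ∈ Finset.univ.erase i, u j = ∑ j ∈ Finset.univ.erase i, v j :=
    Finset.sum_congr rfl (fun j hj => h j (Finset.ne_of_mem_erase hj))
  rw [he]; ring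

end CRC
namespace CRC

def Good (y : ℝ) (s : St) : Prop :=
  (lowS s ≤ y ∧ y ≤ highS s) ∧ (∀ j k, Lf k (s k) ≤ 4 * Lf j (s j))

lemma step_good {y : ℝ} {s : St} (hg : Good y s) :
    Good y (step y s) ∧ SL (step y s) ≤ (17/18) * SL s := by
  obtain ⟨⟨hlow, hhigh⟩, hinv⟩ := hg
  set i := imax s with hi
  set x := pxf i (s i) with hxdef
  set h := phf i (s i) with hhdef
  have hmax : ∀ j, Lf j (s j) ≤ Lf i (s i) := imax_spec s
  have h0 : 0 < h := phf_pos i (s i)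
  have hx2 : 2 * h ≤ x := two_phf_le_pxf i (s i)
  have hx0 : 0 < x := by linarith
  have hLi : Lf i (s i) = 1/x - 1/(x+h) := rfl
  -- sum of L over all is at most 4 * max
  have hSL4 : SL s ≤ 4 * Lf i (s i) := by
    have : SL s ≤ ∑ _j : Fin 4, Lf i (s i) :=
      Finset.sum_le_sum (fun j _ => hmax j)
    simpa using this
  have hSLnn : 0 ≤ SL s := Finset.sum_nonneg (fun j _ => Lf_nonneg j (s j))
  have hLinn : 0 ≤ Lf i (s i) := Lf_nonneg i (s i)
  -- sum of L over others is at least 3/4 of max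
  have hothers : 3 * (Lf i (s i) / 4) ≤ SL s - Lf i (s i) := by
    have hcard : (Finset.univ.erase i).card = 3 := by
      rw [Finset.card_erase_of_mem (Finset.mem_univ i)]
      simp
    have hsum : (Finset.univ.erase i).card • (Lf i (s i) / 4) ≤
        ∑ j ∈ Finset.univ.erase i, Lf j (s j) :=
      Finset.card_nsmul_le_sum _ _ _ (fun j _ => by linarith [hinv j i])
    rw [hcard] at hsum
    have hSLsplit : SL s = Lf i (s i) + ∑ j ∈ Finset.univ.erase i, Lf j (s j) :=
      (Finset.add_sum_erase _ _ (Finset.mem_univ i)).symm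
    rw [nsmul_eq_mul] at hsum; push_cast at hsum
    linarith
  have hgap_half := gap_le_half h0 hx2
  have hgap_ge := gap_ge h0 hx2
  have hchildL := childL_ge h0 hx2
  have hchildR := childR_ge h0 hx2
  rw [step]
  simp only [← hi, ← hxdef, ← hhdef]
  by_cases hc : lowS s - 1/(x+h) + 1/(x+h/3) ≤ y
  · -- left child (digit false)
    rw [if_pos hc]
    set s' := Function.update s i (s i ++ [false]) with hs'
    have hsi' : s' i = s i ++ [false] := Function.update_self i _ s
    have hsj' : ∀ j, j ≠ i → s' j = s j := fun j hj => Function.update_of_ne hj _ s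
    have hx' : pxf i (s' i) = x := by rw [hsi', pxf_append_false]
    have hh' : phf i (s' i) = h / 3 := by rw [hsi', phf_append]
    have hL' : Lf i (s' i) = 1/x - 1/(x+h/3) := by
      unfold Lf; rw [hx', hh']
    have hlow' : lowS s' = lowS s - 1/(x+h) + 1/(x+h/3) := by
      unfold lowS
      rw [sum_eq_of_eq_on (i := i)
        (fun j hj => by rw [hsj' j hj])]
      rw [hx', hh']
    have hhigh' : highS s' = highS s := by
      unfold highS
      rw [sum_eq_of_eq_on (i := i) (fun j hj => by rw [hsj' j hj]), hx']
      ring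
    have hSL' : SL s' = SL s - Lf i (s i) + Lf i (s' i) := by
      unfold SL
      exact sum_eq_of_eq_on (fun j hj => by rw [hsj' j hj])
    have hLnewle : Lf i (s' i) ≤ Lf i (s i) := by
      rw [hL', hLi]
      have : 1/(x+h) ≤ 1/(x+h/3) :=
        one_div_le_one_div_of_le (by linarith) (by linarith)
      linarith
    have hLnewge : Lf i (s i) / 4 ≤ Lf i (s' i) := by rw [hL']; exact hchildL
    refine ⟨⟨⟨by rw [hlow']; exact hc, by rw [hhigh']; exact hhigh⟩, ?_⟩, ?_⟩
    · intro j k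
      have hup : ∀ k, Lf k (s' k) ≤ Lf i (s i) := by
        intro k
        by_cases hk : k = i
        · subst hk; exact hLnewle
        · rw [hsj' k hk]; exact hmax k
      have hdn : ∀ j, Lf i (s i) / 4 ≤ Lf j (s' j) := by
        intro j
        by_cases hj : j = i
        · subst hj; exact hLnewge
        · rw [hsj' j hj]; linarith [hinv j i]
      linarith [hup k, hdn j]
    · -- decay
      have hdrop : Lf i (s' i) ≤ Lf i (s i) - (1/(x+h/3) - 1/(x+2*h/3)) := by
        rw [hL', hLi]
        have : 1/(x+h) ≤ 1/(x+2*h/3) :=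
          one_div_le_one_div_of_le (by linarith) (by linarith)
        linarith
      rw [hSL']
      have : (2/9) * (SL s / 4) ≤ 1/(x+h/3) - 1/(x+2*h/3) := by
        calc (2/9) * (SL s / 4) ≤ (2/9) * Lf i (s i) := by linarith
        _ ≤ _ := by rw [hLi]; exact hgap_ge
      linarith
  · -- right child (digit true)
    rw [if_neg hc]
    push_neg at hc
    set s' := Function.update s i (s i ++ [true]) with hs'
    have hsi' : s' i = s i ++ [true] := Function.update_self i _ s
    have hsj' : ∀ j, j ≠ i → s' j = s j := fun j hj => Function.update_of_ne hj _ s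
    have hx' : pxf i (s' i) = x + 2*h/3 := by rw [hsi', pxf_append_true]
    have hh' : phf i (s' i) = h / 3 := by rw [hsi', phf_append]
    have hxh' : pxf i (s' i) + phf i (s' i) = x + h := by rw [hx', hh']; ring
    have hL' : Lf i (s' i) = 1/(x+2*h/3) - 1/(x+h) := by
      unfold Lf; rw [hx', hh']; ring_nf
    have hlow' : lowS s' = lowS s := by
      unfold lowS
      rw [sum_eq_of_eq_on (i := i) (fun j hj => by rw [hsj' j hj]), hxh']
      ring
    have hhigh' : highS s' = highS s - 1/x + 1/(x+2*h/3) := by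
      unfold highS
      rw [sum_eq_of_eq_on (i := i) (fun j hj => by rw [hsj' j hj]), hx']
    have hSL' : SL s' = SL s - Lf i (s i) + Lf i (s' i) := by
      unfold SL
      exact sum_eq_of_eq_on (fun j hj => by rw [hsj' j hj])
    have hLnewle : Lf i (s' i) ≤ Lf i (s i) := by
      rw [hL', hLi]
      have : 1/(x+2*h/3) ≤ 1/x :=
        one_div_le_one_div_of_le (by linarith) (by linarith)
      linarith
    have hLnewge : Lf i (s i) / 4 ≤ Lf i (s' i) := by rw [hL']; exact hchildR
    have hSLlow : SL s = highS s - lowS s := SL_eq s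
    refine ⟨⟨⟨by rw [hlow']; exact hlow, ?_⟩, ?_⟩, ?_⟩
    · -- y ≤ highS s'
      rw [hhigh']
      -- y < lowS s - 1/(x+h) + 1/(x+h/3), and gap ≤ others' length
      have hkey : 1/(x+h/3) - 1/(x+2*h/3) ≤ (SL s - Lf i (s i)) := by
        calc 1/(x+h/3) - 1/(x+2*h/3) ≤ (1/x - 1/(x+h))/2 := hgap_half
        _ ≤ 3 * (Lf i (s i) / 4) := by rw [hLi] at hLinn; rw [hLi]; linarith
        _ ≤ _ := hothers
      have hexp : SL s - Lf i (s i) = (highS s - 1/x) - (lowS s - 1/(x+h)) := by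
        rw [hSLlow, hLi]; ring
      linarith [hc, hkey, hexp.le]
    · intro j k
      have hup : ∀ k, Lf k (s' k) ≤ Lf i (s i) := by
        intro k
        by_cases hk : k = i
        · subst hk; exact hLnewle
        · rw [hsj' k hk]; exact hmax k
      have hdn : ∀ j, Lf i (s i) / 4 ≤ Lf j (s' j) := by
        intro j
        by_cases hj : j = i
        · subst hj; exact hLnewge
        · rw [hsj' j hj]; linarith [hinv j i]
      linarith [hup k, hdn j]
    · have hdrop : Lf i (s' i) ≤ Lf i (s i) - (1/(x+h/3) - 1/(x+2*h/3)) := by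
        rw [hL', hLi]
        have : 1/(x+h/3) ≤ 1/x :=
          one_div_le_one_div_of_le (by linarith) (by linarith)
        linarith
      rw [hSL']
      have : (2/9) * (SL s / 4) ≤ 1/(x+h/3) - 1/(x+2*h/3) := by
        calc (2/9) * (SL s / 4) ≤ (2/9) * Lf i (s i) := by linarith
        _ ≤ _ := by rw [hLi]; exact hgap_ge
      linarith

end CRC
namespace CRC

open Filter Topology

lemma seq_zero (y : ℝ) : seq y 0 = fun _ => [] := rfl

lemma init_low : lowS (fun _ => []) = 10 := by
  unfold lowS pxf phf
  rw [Fin.sum_univ_four]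
  norm_num [Hc, csum]

lemma init_high : highS (fun _ => []) = 15 := by
  unfold highS pxf
  rw [Fin.sum_univ_four]
  norm_num [Hc, csum]

lemma init_SL : SL (fun _ => []) = 5 := by
  unfold SL Lf pxf phf
  rw [Fin.sum_univ_four]
  norm_num [Hc, csum]

lemma init_good {y : ℝ} (hy : y ∈ Set.Icc (10:ℝ) 15) : Good y (fun _ => []) := by
  refine ⟨⟨by rw [init_low]; exact hy.1, by rw [init_high]; exact hy.2⟩, ?_⟩
  intro j k
  fin_cases j <;> fin_cases k <;> norm_num [Lf, pxf, phf, Hc, csum]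

lemma seq_good {y : ℝ} (hy : y ∈ Set.Icc (10:ℝ) 15) (n : ℕ) :
    Good y (seq y n) ∧ SL (seq y n) ≤ 5 * (17/18)^n := by
  induction n with
  | zero => exact ⟨init_good hy, by rw [seq_zero, init_SL]; norm_num⟩
  | succ n ih =>
    obtain ⟨hg, hs⟩ := ih
    obtain ⟨hg', hd⟩ := step_good hg
    refine ⟨hg', ?_⟩
    calc SL (seq y (n+1)) = SL (step y (seq y n)) := rfl
    _ ≤ (17/18) * SL (seq y n) := hd
    _ ≤ (17/18) * (5*(17/18)^n) := by
        have : (0:ℝ) ≤ 17/18 := by norm_num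
        nlinarith
    _ = 5 * (17/18)^(n+1) := by ring

lemma step_exists_digit (y : ℝ) (s : St) :
    ∃ d : Bool, step y s = Function.update s (imax s) (s (imax s) ++ [d]) := by
  unfold step
  by_cases hc : lowS s - 1/(pxf (imax s) (s (imax s)) + phf (imax s) (s (imax s)))
      + 1/(pxf (imax s) (s (imax s)) + phf (imax s) (s (imax s))/3) ≤ y
  · exact ⟨false, if_pos hc⟩
  · exact ⟨true, if_neg hc⟩

lemma append_mono (i : Fin 4) (l : List Bool) (d : Bool) :
    pxf i l ≤ pxf i (l ++ [d]) ∧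
    pxf i (l ++ [d]) + phf i (l ++ [d]) ≤ pxf i l + phf i l := by
  have h0 := phf_pos i l
  cases d
  · rw [pxf_append_false, phf_append]
    constructor <;> linarith
  · rw [pxf_append_true, phf_append]
    constructor <;> linarith

lemma step_mono (y : ℝ) (s : St) (j : Fin 4) :
    pxf j (s j) ≤ pxf j (step y s j) ∧
    pxf j (step y s j) + phf j (step y s j) ≤ pxf j (s j) + phf j (s j) := by
  obtain ⟨d, hd⟩ := step_exists_digit y s
  rw [hd]
  by_cases hj : j = imax s
  · subst hj
    rw [Function.update_self]
    exact append_mono _ _ d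
  · rw [Function.update_of_ne hj]
    exact ⟨le_refl _, le_refl _⟩

lemma exists_point {y : ℝ} (hy : y ∈ Set.Icc (10:ℝ) 15) :
    ∃ t : Fin 4 → ℝ, (∀ i, t i ∈ cantorSet) ∧
      y = ∑ i, 1 / (Hc i * (2 + t i)) := by
  set X : ℕ → Fin 4 → ℝ := fun n i => pxf i (seq y n i) with hX
  set Hh : ℕ → Fin 4 → ℝ := fun n i => phf i (seq y n i) with hHh
  have hmono : ∀ i, Monotone (fun n => X n i) := by
    intro i
    apply monotone_nat_of_le_succ
    intro n
    exact (step_mono y (seq y n) i).1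
  have hanti : ∀ i, Antitone (fun n => X n i + Hh n i) := by
    intro i
    apply antitone_nat_of_succ_le
    intro n
    exact (step_mono y (seq y n) i).2
  have hHpos : ∀ n i, 0 < Hh n i := fun n i => phf_pos i (seq y n i)
  have hXpos : ∀ n i, 0 < X n i := fun n i => pxf_pos i (seq y n i)
  have hbdd : ∀ i, BddAbove (Set.range (fun n => X n i)) := by
    intro i
    refine ⟨3 * Hc i, ?_⟩
    rintro _ ⟨n, rfl⟩
    have := pxf_add_phf_le i (seq y n i)
    have := hHpos n i
    simp only [hX]
    linarith
  set xI : Fin 4 → ℝ := fun i => ⨆ n, X n i with hxI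
  have hXle : ∀ n i, X n i ≤ xI i := fun n i => le_ciSup (hbdd i) n
  have hup : ∀ n i, xI i ≤ X n i + Hh n i := by
    intro n i
    apply ciSup_le
    intro m
    rcases le_total m n with hmn | hnm
    · have h1 : X m i ≤ X n i := hmono i hmn
      have := hHpos n i
      linarith
    · have h2 : X m i + Hh m i ≤ X n i + Hh n i := hanti i hnm
      linarith [hHpos m i]
  have hxIpos : ∀ i, 0 < xI i := fun i => lt_of_lt_of_le (hXpos 0 i) (hXle 0 i)
  have hT : ∀ i, Tendsto (fun n => X n i) atTop (𝓝 (xI i)) :=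
    fun i => tendsto_atTop_ciSup (hmono i) (hbdd i)
  -- the limits are in the (scaled) Cantor set
  set tI : Fin 4 → ℝ := fun i => xI i / Hc i - 2 with htI
  have hcs : ∀ n i, csum (seq y n i) = X n i / Hc i - 2 := by
    intro n i
    have h := Hc_pos i
    simp only [hX, pxf]
    field_simp
    try ring
  have hTt : ∀ i, Tendsto (fun n => csum (seq y n i)) atTop (𝓝 (tI i)) := by
    intro i
    have := ((hT i).div_const (Hc i)).sub_const 2
    simpa only [hcs] using this
  have htmem : ∀ i, tI i ∈ cantorSet := by
    intro i
    exact isClosed_cantorSet.mem_of_tendsto (hTt i)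
      (Filter.Eventually.of_forall (fun n => csum_mem _))
  have hxI_eq : ∀ i, xI i = Hc i * (2 + tI i) := by
    intro i
    have h := Hc_pos i
    simp only [htI]
    field_simp
    ring
  refine ⟨tI, htmem, ?_⟩
  -- y = sum of reciprocals
  have hkey : y = ∑ i, 1 / xI i := by
    have hsand : ∀ n, lowS (seq y n) ≤ ∑ i, 1 / xI i ∧
        (∑ i, 1 / xI i) ≤ highS (seq y n) := by
      intro n
      constructor
      · apply Finset.sum_le_sum
        intro i _
        exact one_div_le_one_div_of_le (hxIpos i) (hup n i)
      · apply Finset.sum_le_sum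
        intro i _
        exact one_div_le_one_div_of_le (hXpos n i) (hXle n i)
    have habs : ∀ n, |(∑ i, 1 / xI i) - y| ≤ 5 * (17/18:ℝ)^n := by
      intro n
      obtain ⟨⟨hl, hh⟩, _⟩ := (seq_good hy n).1
      have hSLb := (seq_good hy n).2
      have hSLeq := SL_eq (seq y n)
      obtain ⟨hs1, hs2⟩ := hsand n
      rw [abs_sub_le_iff]
      constructor <;> linarith
    have hlim : Tendsto (fun n => 5 * (17/18:ℝ)^n) atTop (𝓝 0) := by
      have := (tendsto_pow_atTop_nhds_zero_of_lt_one
        (by norm_num : (0:ℝ) ≤ 17/18) (by norm_num : (17/18:ℝ) < 1)).const_mul 5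
      simpa using this
    have : |(∑ i, 1 / xI i) - y| ≤ 0 :=
      ge_of_tendsto hlim (Filter.Eventually.of_forall habs)
    have := abs_nonpos_iff.mp this
    linarith [sub_eq_zero.mp this]
  rw [hkey]
  exact Finset.sum_congr rfl (fun i _ => by rw [hxI_eq i])

end CRC
namespace CRC

lemma mem_C9 {t : ℝ} (ht : t ∈ cantorSet) :
    (2 + t)/9 ∈ cantorSet ∩ Set.Icc (2/9 : ℝ) (1/3) := by
  have h01 := cantorSet_subset_unitInterval ht
  simp only [Set.mem_Icc] at h01
  constructor
  · have := cantor_div3 (cantor_add2_div3 ht)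
    have e : (2 + t)/3/3 = (2+t)/9 := by ring
    rwa [e] at this
  · simp only [Set.mem_Icc]
    constructor <;> linarith [h01.1, h01.2]

lemma mem_C3 {t : ℝ} (ht : t ∈ cantorSet) :
    (2 + t)/3 ∈ cantorSet ∩ Set.Icc (2/3 : ℝ) 1 := by
  have h01 := cantorSet_subset_unitInterval ht
  simp only [Set.mem_Icc] at h01
  refine ⟨cantor_add2_div3 ht, ?_⟩
  simp only [Set.mem_Icc]
  constructor <;> linarith [h01.1, h01.2]

lemma recip_bounds1 {x : ℝ} (h : x ∈ Set.Icc (2/9 : ℝ) (1/3)) :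
    3 ≤ 1/x ∧ 1/x ≤ 9/2 := by
  obtain ⟨h1, h2⟩ := h
  have hx0 : 0 < x := lt_of_lt_of_le (by norm_num) h1
  constructor
  · have := one_div_le_one_div_of_le hx0 h2
    rw [one_div]
    norm_num at this ⊢
    linarith
  · have := one_div_le_one_div_of_le (by norm_num : (0:ℝ) < 2/9) h1
    rw [one_div]
    norm_num at this ⊢
    linarith

lemma recip_bounds2 {x : ℝ} (h : x ∈ Set.Icc (2/3 : ℝ) 1) :
    1 ≤ 1/x ∧ 1/x ≤ 3/2 := by
  obtain ⟨h1, h2⟩ := h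
  have hx0 : 0 < x := lt_of_lt_of_le (by norm_num) h1
  constructor
  · have := one_div_le_one_div_of_le hx0 h2
    rw [one_div]
    norm_num at this ⊢
    linarith
  · have := one_div_le_one_div_of_le (by norm_num : (0:ℝ) < 2/3) h1
    rw [one_div]
    norm_num at this ⊢
    linarith

end CRC

open CRC

theorem four_reciprocals_cantorSet_mixed_eq_Icc_ten_fifteen :
    {y : ℝ | ∃ x₁ ∈ cantorSet ∩ Set.Icc (2 / 9 : ℝ) (1 / 3),
        ∃ x₂ ∈ cantorSet ∩ Set.Icc (2 / 9 : ℝ) (1 / 3),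
        ∃ x₃ ∈ cantorSet ∩ Set.Icc (2 / 9 : ℝ) (1 / 3),
        ∃ x₄ ∈ cantorSet ∩ Set.Icc (2 / 3 : ℝ) 1,
        y = 1 / x₁ + 1 / x₂ + 1 / x₃ + 1 / x₄}
      = Set.Icc (10 : ℝ) 15 := by
  ext y
  simp only [Set.mem_setOf_eq, Set.mem_inter_iff]
  constructor
  · rintro ⟨x₁, ⟨_, hi1⟩, x₂, ⟨_, hi2⟩, x₃, ⟨_, hi3⟩, x₄, ⟨_, hi4⟩, rfl⟩
    obtain ⟨a1, b1⟩ := recip_bounds1 hi1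
    obtain ⟨a2, b2⟩ := recip_bounds1 hi2
    obtain ⟨a3, b3⟩ := recip_bounds1 hi3
    obtain ⟨a4, b4⟩ := recip_bounds2 hi4
    simp only [Set.mem_Icc]
    constructor <;> linarith
  · intro hy
    obtain ⟨t, htm, hsum⟩ := exists_point hy
    rw [Fin.sum_univ_four] at hsum
    have e0 : Hc 0 * (2 + t 0) = (2 + t 0)/9 := by norm_num [Hc]; ring
    have e1 : Hc 1 * (2 + t 1) = (2 + t 1)/9 := by norm_num [Hc]; ring
    have e2 : Hc 2 * (2 + t 2) = (2 + t 2)/9 := by norm_num [Hc]; ring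
    have e3 : Hc 3 * (2 + t 3) = (2 + t 3)/3 := by norm_num [Hc]; ring
    rw [e0, e1, e2, e3] at hsum
    exact ⟨_, mem_C9 (htm 0), _, mem_C9 (htm 1), _, mem_C9 (htm 2), _, mem_C3 (htm 3), hsum⟩
end

section
/- Let C be the middle-third Cantor set. Then {1/x₁ + 1/x₂ + 1/x₃ + 1/x₄ : x₁, x₂ ∈ C ∩ [8/27, 1/3], x₃, x₄ ∈ C ∩ [8/9, 1]} ⊇ [8, 9]. -/
open Set Filter Topology

/-! ### Self-similarity of the Cantor set -/

lemma mem_cantorSet_div_three {x : ℝ} (hx : x ∈ cantorSet) : x / 3 ∈ cantorSet := by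
  have hx' : ∀ n, x ∈ preCantorSet n := Set.mem_iInter.mp hx
  refine Set.mem_iInter.mpr fun n => ?_
  cases n with
  | zero =>
    have h0 := hx' 0
    simp only [preCantorSet_zero, Set.mem_Icc] at h0 ⊢
    constructor <;> linarith [h0.1, h0.2]
  | succ n => exact Or.inl ⟨x, hx' n, rfl⟩

lemma mem_cantorSet_two_add_div_three {x : ℝ} (hx : x ∈ cantorSet) :
    (2 + x) / 3 ∈ cantorSet := by
  have hx' : ∀ n, x ∈ preCantorSet n := Set.mem_iInter.mp hx
  refine Set.mem_iInter.mpr fun n => ?_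
  cases n with
  | zero =>
    have h0 := hx' 0
    simp only [preCantorSet_zero, Set.mem_Icc] at h0 ⊢
    constructor <;> linarith [h0.1, h0.2]
  | succ n => exact Or.inr ⟨x, hx' n, rfl⟩

lemma one_mem_cantorSet : (1 : ℝ) ∈ cantorSet := by
  refine Set.mem_iInter.mpr fun n => ?_
  induction n with
  | zero => simp [preCantorSet]
  | succ n ih => exact Or.inr ⟨1, ih, by norm_num⟩

/-! ### Good intervals: affine copies of the Cantor set inside the Cantor set -/

def GoodIv (a ℓ : ℝ) : Prop := ∀ x ∈ cantorSet, a + ℓ * x ∈ cantorSet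

lemma GoodIv.base : GoodIv (8/9) (1/9) := by
  intro x hx
  have h1 := mem_cantorSet_two_add_div_three hx
  have h2 := mem_cantorSet_two_add_div_three h1
  have e : (8:ℝ)/9 + 1/9 * x = (2 + (2 + x) / 3) / 3 := by ring
  rw [e]; exact h2

lemma GoodIv.left {a ℓ : ℝ} (h : GoodIv a ℓ) : GoodIv a (ℓ/3) := by
  intro x hx
  have h1 := h (x/3) (mem_cantorSet_div_three hx)
  have e : a + ℓ/3 * x = a + ℓ * (x/3) := by ring
  rw [e]; exact h1

lemma GoodIv.right {a ℓ : ℝ} (h : GoodIv a ℓ) : GoodIv (a + 2*ℓ/3) (ℓ/3) := by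
  intro x hx
  have h1 := h ((2+x)/3) (mem_cantorSet_two_add_div_three hx)
  have e : a + 2*ℓ/3 + ℓ/3 * x = a + ℓ * ((2+x)/3) := by ring
  rw [e]; exact h1

lemma GoodIv.mem {a ℓ : ℝ} (h : GoodIv a ℓ) : a ∈ cantorSet := by
  have := h 0 zero_mem_cantorSet
  simpa using this

/-! ### Elementary bounds on differences of reciprocals -/

lemma inv_diff_ge {x d : ℝ} (hx : 8/9 ≤ x) (hu : x + d ≤ 1) (hd : 0 ≤ d) :
    d ≤ 1/x - 1/(x+d) := by
  have hx0 : (0:ℝ) < x := by linarith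
  have hxd0 : (0:ℝ) < x + d := by linarith
  have key : 1/x - 1/(x+d) = d / (x*(x+d)) := by field_simp; ring
  have hden : x*(x+d) ≤ 1 := by nlinarith
  rw [key, le_div_iff₀ (mul_pos hx0 hxd0)]
  nlinarith

lemma inv_diff_le {x d : ℝ} (hx : 8/9 ≤ x) (hu : x + d ≤ 1) (hd : 0 ≤ d) :
    1/x - 1/(x+d) ≤ (81/64) * d := by
  have hx0 : (0:ℝ) < x := by linarith
  have hxd0 : (0:ℝ) < x + d := by linarith
  have key : 1/x - 1/(x+d) = d / (x*(x+d)) := by field_simp; ring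
  have hden : (64:ℝ)/81 ≤ x*(x+d) := by nlinarith
  rw [key, div_le_iff₀ (mul_pos hx0 hxd0)]
  nlinarith

/-! ### The invariant for the four-interval descent -/

structure CInv (t x1 x2 x3 x4 L : ℝ) : Prop where
  g1 : GoodIv x1 L
  g2 : GoodIv x2 L
  g3 : GoodIv x3 L
  g4 : GoodIv x4 L
  lb1 : 8/9 ≤ x1
  lb2 : 8/9 ≤ x2
  lb3 : 8/9 ≤ x3
  lb4 : 8/9 ≤ x4
  ub1 : x1 + L ≤ 1
  ub2 : x2 + L ≤ 1
  ub3 : x3 + L ≤ 1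
  ub4 : x4 + L ≤ 1
  hL : 0 < L
  lo : 3/(x1+L) + 3/(x2+L) + 1/(x3+L) + 1/(x4+L) ≤ t
  hi : t ≤ 3/x1 + 3/x2 + 1/x3 + 1/x4

/-- One-variable splitting step. `w` is the weight of the variable, `rlo, rhi` the
frozen contributions of the other variables. -/
lemma key_split {t w x L rlo rhi : ℝ} (hw : 0 < w)
    (hx : 8/9 ≤ x) (hxu : x + L ≤ 1) (hL : 0 < L)
    (hslack : w * L * (27/64) ≤ rhi - rlo)
    (hlo : w/(x+L) + rlo ≤ t) (hhi : t ≤ w/x + rhi) :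
    ∃ y, (y = x ∨ y = x + 2*L/3) ∧ w/(y+L/3) + rlo ≤ t ∧ t ≤ w/y + rhi := by
  rcases le_or_gt t (w/(x + 2*L/3) + rhi) with hc | hc
  · refine ⟨x + 2*L/3, Or.inr rfl, ?_, hc⟩
    rw [show x + 2*L/3 + L/3 = x + L by ring]
    exact hlo
  · refine ⟨x, Or.inl rfl, ?_, hhi⟩
    have hd : 1/(x+L/3) - 1/((x+L/3)+(L/3)) ≤ (81/64) * (L/3) :=
      inv_diff_le (by linarith) (by linarith) (by linarith)
    rw [show (x+L/3)+(L/3) = x + 2*L/3 by ring] at hd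
    have hA : w/(x+L/3) - w/(x+2*L/3) ≤ w * L * (27/64) := by
      have h := mul_le_mul_of_nonneg_left hd hw.le
      have e1 : w/(x+L/3) - w/(x+2*L/3) = w * (1/(x+L/3) - 1/(x+2*L/3)) := by ring
      rw [e1]
      calc w * (1/(x+L/3) - 1/(x+2*L/3)) ≤ w * ((81/64) * (L/3)) := h
        _ = w * L * (27/64) := by ring
    linarith

set_option maxHeartbeats 1000000 in
/-- The main descent step: refine all four intervals by a factor 3. -/
lemma descent_step {t x1 x2 x3 x4 L : ℝ} (h : CInv t x1 x2 x3 x4 L) :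
    ∃ y1 y2 y3 y4, CInv t y1 y2 y3 y4 (L/3) ∧
      x1 ≤ y1 ∧ y1 + L/3 ≤ x1 + L ∧ x2 ≤ y2 ∧ y2 + L/3 ≤ x2 + L ∧
      x3 ≤ y3 ∧ y3 + L/3 ≤ x3 + L ∧ x4 ≤ y4 ∧ y4 + L/3 ≤ x4 + L := by
  obtain ⟨g1, g2, g3, g4, lb1, lb2, lb3, lb4, ub1, ub2, ub3, ub4, hL, lo, hi⟩ := h
  have hL3 : (0:ℝ) < L/3 := by linarith
  -- width lower bounds for the initial intervals
  have w2 : L ≤ 1/x2 - 1/(x2+L) := inv_diff_ge lb2 ub2 hL.le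
  have w3 : L ≤ 1/x3 - 1/(x3+L) := inv_diff_ge lb3 ub3 hL.le
  have w4 : L ≤ 1/x4 - 1/(x4+L) := inv_diff_ge lb4 ub4 hL.le
  have E2 : (3:ℝ)/x2 - 3/(x2+L) = 3*(1/x2 - 1/(x2+L)) := by ring
  -- split variable 1 (weight 3)
  obtain ⟨y1, hy1, lo1, hi1⟩ :=
    key_split (t := t) (w := 3) (x := x1) (L := L)
      (rlo := 3/(x2+L) + 1/(x3+L) + 1/(x4+L)) (rhi := 3/x2 + 1/x3 + 1/x4)
      (by norm_num) lb1 ub1 hL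
      (by linarith) (by linarith) (by linarith)
  have lb1' : 8/9 ≤ y1 := by rcases hy1 with rfl | rfl <;> linarith
  have ub1' : y1 + L/3 ≤ 1 := by rcases hy1 with rfl | rfl <;> linarith
  have n1a : x1 ≤ y1 := by rcases hy1 with rfl | rfl <;> linarith
  have n1b : y1 + L/3 ≤ x1 + L := by rcases hy1 with rfl | rfl <;> linarith
  have w1' : L/3 ≤ 1/y1 - 1/(y1+L/3) := inv_diff_ge lb1' ub1' hL3.le
  have E1' : (3:ℝ)/y1 - 3/(y1+L/3) = 3*(1/y1 - 1/(y1+L/3)) := by ring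
  -- split variable 2 (weight 3)
  obtain ⟨y2, hy2, lo2, hi2⟩ :=
    key_split (t := t) (w := 3) (x := x2) (L := L)
      (rlo := 3/(y1+L/3) + 1/(x3+L) + 1/(x4+L)) (rhi := 3/y1 + 1/x3 + 1/x4)
      (by norm_num) lb2 ub2 hL
      (by linarith) (by linarith) (by linarith)
  have lb2' : 8/9 ≤ y2 := by rcases hy2 with rfl | rfl <;> linarith
  have ub2' : y2 + L/3 ≤ 1 := by rcases hy2 with rfl | rfl <;> linarith
  have n2a : x2 ≤ y2 := by rcases hy2 with rfl | rfl <;> linarith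
  have n2b : y2 + L/3 ≤ x2 + L := by rcases hy2 with rfl | rfl <;> linarith
  have w2' : L/3 ≤ 1/y2 - 1/(y2+L/3) := inv_diff_ge lb2' ub2' hL3.le
  have E2' : (3:ℝ)/y2 - 3/(y2+L/3) = 3*(1/y2 - 1/(y2+L/3)) := by ring
  -- split variable 3 (weight 1)
  obtain ⟨y3, hy3, lo3, hi3⟩ :=
    key_split (t := t) (w := 1) (x := x3) (L := L)
      (rlo := 3/(y1+L/3) + 3/(y2+L/3) + 1/(x4+L)) (rhi := 3/y1 + 3/y2 + 1/x4)
      (by norm_num) lb3 ub3 hL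
      (by linarith) (by linarith) (by linarith)
  have lb3' : 8/9 ≤ y3 := by rcases hy3 with rfl | rfl <;> linarith
  have ub3' : y3 + L/3 ≤ 1 := by rcases hy3 with rfl | rfl <;> linarith
  have n3a : x3 ≤ y3 := by rcases hy3 with rfl | rfl <;> linarith
  have n3b : y3 + L/3 ≤ x3 + L := by rcases hy3 with rfl | rfl <;> linarith
  have w3' : L/3 ≤ 1/y3 - 1/(y3+L/3) := inv_diff_ge lb3' ub3' hL3.le
  -- split variable 4 (weight 1)
  obtain ⟨y4, hy4, lo4, hi4⟩ :=
    key_split (t := t) (w := 1) (x := x4) (L := L)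
      (rlo := 3/(y1+L/3) + 3/(y2+L/3) + 1/(y3+L/3)) (rhi := 3/y1 + 3/y2 + 1/y3)
      (by norm_num) lb4 ub4 hL
      (by linarith) (by linarith) (by linarith)
  have lb4' : 8/9 ≤ y4 := by rcases hy4 with rfl | rfl <;> linarith
  have ub4' : y4 + L/3 ≤ 1 := by rcases hy4 with rfl | rfl <;> linarith
  have n4a : x4 ≤ y4 := by rcases hy4 with rfl | rfl <;> linarith
  have n4b : y4 + L/3 ≤ x4 + L := by rcases hy4 with rfl | rfl <;> linarith
  -- assemble
  have G1 : GoodIv y1 (L/3) := by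
    rcases hy1 with rfl | rfl
    · exact g1.left
    · exact g1.right
  have G2 : GoodIv y2 (L/3) := by
    rcases hy2 with rfl | rfl
    · exact g2.left
    · exact g2.right
  have G3 : GoodIv y3 (L/3) := by
    rcases hy3 with rfl | rfl
    · exact g3.left
    · exact g3.right
  have G4 : GoodIv y4 (L/3) := by
    rcases hy4 with rfl | rfl
    · exact g4.left
    · exact g4.right
  exact ⟨y1, y2, y3, y4,
    ⟨G1, G2, G3, G4, lb1', lb2', lb3', lb4', ub1', ub2', ub3', ub4', hL3,
      by linarith, by linarith⟩,
    n1a, n1b, n2a, n2b, n3a, n3b, n4a, n4b⟩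

/-! ### Iterating the descent -/

structure CBox (t : ℝ) where
  x1 : ℝ
  x2 : ℝ
  x3 : ℝ
  x4 : ℝ
  L : ℝ
  inv : CInv t x1 x2 x3 x4 L

lemma descent_box {t : ℝ} (b : CBox t) :
    ∃ b' : CBox t, b'.L = b.L/3 ∧
      b.x1 ≤ b'.x1 ∧ b'.x1 + b'.L ≤ b.x1 + b.L ∧
      b.x2 ≤ b'.x2 ∧ b'.x2 + b'.L ≤ b.x2 + b.L ∧
      b.x3 ≤ b'.x3 ∧ b'.x3 + b'.L ≤ b.x3 + b.L ∧
      b.x4 ≤ b'.x4 ∧ b'.x4 + b'.L ≤ b.x4 + b.L := by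
  obtain ⟨y1, y2, y3, y4, hinv, h⟩ := descent_step b.inv
  exact ⟨⟨y1, y2, y3, y4, b.L/3, hinv⟩, rfl, h.1, h.2.1, h.2.2.1, h.2.2.2.1,
    h.2.2.2.2.1, h.2.2.2.2.2.1, h.2.2.2.2.2.2.1, h.2.2.2.2.2.2.2⟩

noncomputable def nextBox {t : ℝ} (b : CBox t) : CBox t := (descent_box b).choose

lemma nextBox_spec {t : ℝ} (b : CBox t) :
    (nextBox b).L = b.L/3 ∧
      b.x1 ≤ (nextBox b).x1 ∧ (nextBox b).x1 + (nextBox b).L ≤ b.x1 + b.L ∧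
      b.x2 ≤ (nextBox b).x2 ∧ (nextBox b).x2 + (nextBox b).L ≤ b.x2 + b.L ∧
      b.x3 ≤ (nextBox b).x3 ∧ (nextBox b).x3 + (nextBox b).L ≤ b.x3 + b.L ∧
      b.x4 ≤ (nextBox b).x4 ∧ (nextBox b).x4 + (nextBox b).L ≤ b.x4 + b.L :=
  (descent_box b).choose_spec

noncomputable def boxSeq {t : ℝ} (b0 : CBox t) : ℕ → CBox t :=
  fun n => nextBox^[n] b0

lemma boxSeq_zero {t : ℝ} (b0 : CBox t) : boxSeq b0 0 = b0 := rfl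

lemma boxSeq_succ {t : ℝ} (b0 : CBox t) (n : ℕ) :
    boxSeq b0 (n+1) = nextBox (boxSeq b0 n) :=
  Function.iterate_succ_apply' _ _ _

lemma boxSeq_spec {t : ℝ} (b0 : CBox t) (n : ℕ) :
    (boxSeq b0 (n+1)).L = (boxSeq b0 n).L/3 ∧
      (boxSeq b0 n).x1 ≤ (boxSeq b0 (n+1)).x1 ∧
      (boxSeq b0 (n+1)).x1 + (boxSeq b0 (n+1)).L ≤ (boxSeq b0 n).x1 + (boxSeq b0 n).L ∧
      (boxSeq b0 n).x2 ≤ (boxSeq b0 (n+1)).x2 ∧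
      (boxSeq b0 (n+1)).x2 + (boxSeq b0 (n+1)).L ≤ (boxSeq b0 n).x2 + (boxSeq b0 n).L ∧
      (boxSeq b0 n).x3 ≤ (boxSeq b0 (n+1)).x3 ∧
      (boxSeq b0 (n+1)).x3 + (boxSeq b0 (n+1)).L ≤ (boxSeq b0 n).x3 + (boxSeq b0 n).L ∧
      (boxSeq b0 n).x4 ≤ (boxSeq b0 (n+1)).x4 ∧
      (boxSeq b0 (n+1)).x4 + (boxSeq b0 (n+1)).L ≤ (boxSeq b0 n).x4 + (boxSeq b0 n).L := by
  rw [boxSeq_succ]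
  exact nextBox_spec _

/-- The limit extraction: a convergent monotone coordinate of the box sequence. -/
lemma box_limit {t : ℝ} (b0 : CBox t) (hL0 : b0.L = 1/9)
    (X : ℕ → ℝ) (lbX : ∀ n, 8/9 ≤ X n) (ubX : ∀ n, X n + (boxSeq b0 n).L ≤ 1)
    (monoX : ∀ n, X n ≤ X (n+1)) (nestX : ∀ n, X (n+1) + (boxSeq b0 (n+1)).L ≤ X n + (boxSeq b0 n).L)
    (memX : ∀ n, X n ∈ cantorSet) :
    ∃ u ∈ cantorSet, 8/9 ≤ u ∧ u ≤ 1 ∧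
      Tendsto X atTop (𝓝 u) ∧ Tendsto (fun n => X n + (boxSeq b0 n).L) atTop (𝓝 u) := by
  have hLpos : ∀ n, 0 < (boxSeq b0 n).L := fun n => (boxSeq b0 n).inv.hL
  have hXle1 : ∀ n, X n ≤ 1 := fun n => by linarith [ubX n, hLpos n]
  have hbdd : BddAbove (Set.range X) := ⟨1, by rintro _ ⟨n, rfl⟩; exact hXle1 n⟩
  have hmono : Monotone X := monotone_nat_of_le_succ monoX
  set u := ⨆ n, X n with hu
  have htend : Tendsto X atTop (𝓝 u) := tendsto_atTop_ciSup hmono hbdd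
  -- L tends to zero
  have hLn : ∀ n, (boxSeq b0 n).L = (1/9) * (1/3)^n := by
    intro n
    induction n with
    | zero => simpa [boxSeq_zero] using hL0
    | succ n ih =>
      rw [boxSeq_succ, (nextBox_spec _).1, ih]
      ring
  have hLtend : Tendsto (fun n => (boxSeq b0 n).L) atTop (𝓝 0) := by
    have h3 : Tendsto (fun n : ℕ => ((1:ℝ)/3)^n) atTop (𝓝 0) :=
      tendsto_pow_atTop_nhds_zero_of_lt_one (by norm_num) (by norm_num)
    have := h3.const_mul ((1:ℝ)/9)
    simp only [mul_zero] at this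
    exact Tendsto.congr (fun n => (hLn n).symm) this
  have htend2 : Tendsto (fun n => X n + (boxSeq b0 n).L) atTop (𝓝 u) := by
    have := htend.add hLtend
    simpa using this
  refine ⟨u, ?_, ?_, ?_, htend, htend2⟩
  · exact isClosed_cantorSet.mem_of_tendsto htend (Eventually.of_forall memX)
  · exact le_trans (lbX 0) (le_ciSup hbdd 0)
  · exact ciSup_le hXle1

/-- Main covering lemma: every `t ∈ [8,9]` is `3/u₁ + 3/u₂ + 1/u₃ + 1/u₄`
with all `uᵢ` in the Cantor set intersected with `[8/9, 1]`. -/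
lemma cover {t : ℝ} (h8 : 8 ≤ t) (h9 : t ≤ 9) :
    ∃ u1 u2 u3 u4 : ℝ,
      (u1 ∈ cantorSet ∧ 8/9 ≤ u1 ∧ u1 ≤ 1) ∧
      (u2 ∈ cantorSet ∧ 8/9 ≤ u2 ∧ u2 ≤ 1) ∧
      (u3 ∈ cantorSet ∧ 8/9 ≤ u3 ∧ u3 ≤ 1) ∧
      (u4 ∈ cantorSet ∧ 8/9 ≤ u4 ∧ u4 ≤ 1) ∧
      t = 3/u1 + 3/u2 + 1/u3 + 1/u4 := by
  have hinv : CInv t (8/9) (8/9) (8/9) (8/9) (1/9) := by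
    refine ⟨GoodIv.base, GoodIv.base, GoodIv.base, GoodIv.base,
      le_refl _, le_refl _, le_refl _, le_refl _,
      by norm_num, by norm_num, by norm_num, by norm_num, by norm_num, ?_, ?_⟩
    · have h : (3:ℝ)/(8/9+1/9) + 3/(8/9+1/9) + 1/(8/9+1/9) + 1/(8/9+1/9) = 8 := by norm_num
      linarith
    · have h : (3:ℝ)/(8/9) + 3/(8/9) + 1/(8/9) + 1/(8/9) = 9 := by norm_num
      linarith
  set b0 : CBox t := ⟨8/9, 8/9, 8/9, 8/9, 1/9, hinv⟩ with hb0
  have hL0 : b0.L = 1/9 := rfl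
  -- limits of the four coordinates
  obtain ⟨u1, hu1C, hu1l, hu1u, T1, T1'⟩ :=
    box_limit b0 hL0 (fun n => (boxSeq b0 n).x1)
      (fun n => (boxSeq b0 n).inv.lb1) (fun n => (boxSeq b0 n).inv.ub1)
      (fun n => (boxSeq_spec b0 n).2.1)
      (fun n => (boxSeq_spec b0 n).2.2.1)
      (fun n => (boxSeq b0 n).inv.g1.mem)
  obtain ⟨u2, hu2C, hu2l, hu2u, T2, T2'⟩ :=
    box_limit b0 hL0 (fun n => (boxSeq b0 n).x2)
      (fun n => (boxSeq b0 n).inv.lb2) (fun n => (boxSeq b0 n).inv.ub2)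
      (fun n => (boxSeq_spec b0 n).2.2.2.1)
      (fun n => (boxSeq_spec b0 n).2.2.2.2.1)
      (fun n => (boxSeq b0 n).inv.g2.mem)
  obtain ⟨u3, hu3C, hu3l, hu3u, T3, T3'⟩ :=
    box_limit b0 hL0 (fun n => (boxSeq b0 n).x3)
      (fun n => (boxSeq b0 n).inv.lb3) (fun n => (boxSeq b0 n).inv.ub3)
      (fun n => (boxSeq_spec b0 n).2.2.2.2.2.1)
      (fun n => (boxSeq_spec b0 n).2.2.2.2.2.2.1)
      (fun n => (boxSeq b0 n).inv.g3.mem)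
  obtain ⟨u4, hu4C, hu4l, hu4u, T4, T4'⟩ :=
    box_limit b0 hL0 (fun n => (boxSeq b0 n).x4)
      (fun n => (boxSeq b0 n).inv.lb4) (fun n => (boxSeq b0 n).inv.ub4)
      (fun n => (boxSeq_spec b0 n).2.2.2.2.2.2.2.1)
      (fun n => (boxSeq_spec b0 n).2.2.2.2.2.2.2.2)
      (fun n => (boxSeq b0 n).inv.g4.mem)
  have hu1ne : u1 ≠ 0 := by intro h; rw [h] at hu1l; norm_num at hu1l
  have hu2ne : u2 ≠ 0 := by intro h; rw [h] at hu2l; norm_num at hu2l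
  have hu3ne : u3 ≠ 0 := by intro h; rw [h] at hu3l; norm_num at hu3l
  have hu4ne : u4 ≠ 0 := by intro h; rw [h] at hu4l; norm_num at hu4l
  -- upper side
  have Shi : Tendsto (fun n => 3/(boxSeq b0 n).x1 + 3/(boxSeq b0 n).x2
      + 1/(boxSeq b0 n).x3 + 1/(boxSeq b0 n).x4) atTop
      (𝓝 (3/u1 + 3/u2 + 1/u3 + 1/u4)) :=
    (((tendsto_const_nhds.div T1 hu1ne).add (tendsto_const_nhds.div T2 hu2ne)).add
      (tendsto_const_nhds.div T3 hu3ne)).add (tendsto_const_nhds.div T4 hu4ne)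
  have Slo : Tendsto (fun n => 3/((boxSeq b0 n).x1 + (boxSeq b0 n).L)
      + 3/((boxSeq b0 n).x2 + (boxSeq b0 n).L)
      + 1/((boxSeq b0 n).x3 + (boxSeq b0 n).L)
      + 1/((boxSeq b0 n).x4 + (boxSeq b0 n).L)) atTop
      (𝓝 (3/u1 + 3/u2 + 1/u3 + 1/u4)) :=
    (((tendsto_const_nhds.div T1' hu1ne).add (tendsto_const_nhds.div T2' hu2ne)).add
      (tendsto_const_nhds.div T3' hu3ne)).add (tendsto_const_nhds.div T4' hu4ne)
  have hge : t ≤ 3/u1 + 3/u2 + 1/u3 + 1/u4 :=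
    ge_of_tendsto Shi (Eventually.of_forall fun n => (boxSeq b0 n).inv.hi)
  have hle : 3/u1 + 3/u2 + 1/u3 + 1/u4 ≤ t :=
    le_of_tendsto Slo (Eventually.of_forall fun n => (boxSeq b0 n).inv.lo)
  exact ⟨u1, u2, u3, u4, ⟨hu1C, hu1l, hu1u⟩, ⟨hu2C, hu2l, hu2u⟩,
    ⟨hu3C, hu3l, hu3u⟩, ⟨hu4C, hu4l, hu4u⟩, le_antisymm hge hle⟩

theorem four_reciprocals_cantorSet_supset_Icc_eight_nine :
    Set.Icc (8 : ℝ) 9 ⊆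
      {y : ℝ | ∃ x₁ ∈ cantorSet ∩ Set.Icc (8 / 27 : ℝ) (1 / 3),
        ∃ x₂ ∈ cantorSet ∩ Set.Icc (8 / 27 : ℝ) (1 / 3),
        ∃ x₃ ∈ cantorSet ∩ Set.Icc (8 / 9 : ℝ) 1,
        ∃ x₄ ∈ cantorSet ∩ Set.Icc (8 / 9 : ℝ) 1,
        y = 1 / x₁ + 1 / x₂ + 1 / x₃ + 1 / x₄} := by
  intro y hy
  obtain ⟨u1, u2, u3, u4, ⟨h1C, h1l, h1u⟩, ⟨h2C, h2l, h2u⟩, ⟨h3C, h3l, h3u⟩,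
    ⟨h4C, h4l, h4u⟩, heq⟩ := cover hy.1 hy.2
  refine ⟨u1/3, ⟨mem_cantorSet_div_three h1C, by constructor <;> [linarith; linarith]⟩,
    u2/3, ⟨mem_cantorSet_div_three h2C, by constructor <;> [linarith; linarith]⟩,
    u3, ⟨h3C, by constructor <;> [linarith; linarith]⟩,
    u4, ⟨h4C, by constructor <;> [linarith; linarith]⟩, ?_⟩
  rw [one_div_div, one_div_div]
  exact heq
end

section
/- Let C be the middle-third Cantor set. Then {1/x₁ + 1/x₂ + 1/x₃ + 1/x₄ : x₁ ∈ C ∩ [8/27, 1/3], x₂, x₃, x₄ ∈ C ∩ [2/3, 1]} ⊇ [6, 63/8]. -/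
open Set

/-- scaled copy map: x ↦ x/3 preserves the Cantor set -/
lemma crDiv3_mem {t : ℝ} (ht : t ∈ cantorSet) : t / 3 ∈ cantorSet := by
  rw [cantorSet, Set.mem_iInter] at ht ⊢
  intro n
  cases n with
  | zero =>
    have h0 := ht 0
    simp only [preCantorSet_zero, Set.mem_Icc] at h0 ⊢
    constructor <;> linarith [h0.1, h0.2]
  | succ n => exact Or.inl ⟨t, ht n, rfl⟩

lemma crTwoAdd_mem {t : ℝ} (ht : t ∈ cantorSet) : (2 + t) / 3 ∈ cantorSet := by
  rw [cantorSet, Set.mem_iInter] at ht ⊢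
  intro n
  cases n with
  | zero =>
    have h0 := ht 0
    simp only [preCantorSet_zero, Set.mem_Icc] at h0 ⊢
    constructor <;> linarith [h0.1, h0.2]
  | succ n => exact Or.inr ⟨t, ht n, rfl⟩

noncomputable def crL (k : ℕ) : ℝ := (1/3 : ℝ) ^ k

lemma crL_succ (k : ℕ) : crL (k+1) = crL k / 3 := by
  simp only [crL, pow_succ]; ring

lemma crL_pos (k : ℕ) : 0 < crL k := by unfold crL; positivity

def crP : ℕ → ℝ → Prop
  | 0 => fun a => a = 0
  | (k+1) => fun a => ∃ b, crP k b ∧ (a = b ∨ a = b + 2 * crL k / 3)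

lemma crP_bounds : ∀ (k : ℕ) (a : ℝ), crP k a → 0 ≤ a ∧ a + crL k ≤ 1 := by
  intro k
  induction k with
  | zero => intro a ha; rw [crP] at ha; subst ha; simp [crL]
  | succ k ih =>
    intro a ha
    obtain ⟨b, hb, hab⟩ := ha
    obtain ⟨hb0, hb1⟩ := ih b hb
    have hL := crL_pos k
    rw [crL_succ]
    rcases hab with rfl | rfl <;> constructor <;> linarith

lemma crP_memC : ∀ (k : ℕ) (a : ℝ), crP k a → ∀ t ∈ cantorSet, a + t * crL k ∈ cantorSet := by
  intro k
  induction k with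
  | zero =>
    intro a ha t ht; rw [crP] at ha; subst ha
    simpa [crL] using ht
  | succ k ih =>
    intro a ha t ht
    obtain ⟨b, hb, hab⟩ := ha
    rcases hab with hab | hab
    · have h2 := ih b hb (t/3) (crDiv3_mem ht)
      have e : a + t * crL (k+1) = b + t/3 * crL k := by rw [hab, crL_succ]; ring
      rw [e]; exact h2
    · have h2 := ih b hb ((2+t)/3) (crTwoAdd_mem ht)
      have e : a + t * crL (k+1) = b + (2+t)/3 * crL k := by rw [hab, crL_succ]; ring
      rw [e]; exact h2

lemma crP_mem {k : ℕ} {a : ℝ} (ha : crP k a) : a ∈ cantorSet := by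
  have := crP_memC k a ha 0 zero_mem_cantorSet
  simpa using this

theorem tst : True := trivial
noncomputable def crG (a : ℝ) : ℝ := 27 / (8 + a)
noncomputable def crH (a : ℝ) : ℝ := 3 / (2 + a)

lemma crG_range_lo {a ℓ : ℝ} (ha : 0 ≤ a) (hℓ : 0 ≤ ℓ) (h1 : a + ℓ ≤ 1) :
    ℓ / 3 ≤ crG a - crG (a + ℓ) := by
  have d1 : (0:ℝ) < 8 + a := by linarith
  have d2 : (0:ℝ) < 8 + (a + ℓ) := by linarith
  have hD : (8 + a) * (8 + (a + ℓ)) ≤ 81 := by nlinarith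
  simp only [crG]
  rw [div_sub_div _ _ (ne_of_gt d1) (ne_of_gt d2), le_div_iff₀ (by positivity)]
  have := mul_le_mul_of_nonneg_left hD (by linarith : (0:ℝ) ≤ ℓ / 3)
  linarith

lemma crH_range_lo {a ℓ : ℝ} (ha : 0 ≤ a) (hℓ : 0 ≤ ℓ) (h1 : a + ℓ ≤ 1) :
    ℓ / 3 ≤ crH a - crH (a + ℓ) := by
  have d1 : (0:ℝ) < 2 + a := by linarith
  have d2 : (0:ℝ) < 2 + (a + ℓ) := by linarith
  have hD : (2 + a) * (2 + (a + ℓ)) ≤ 9 := by nlinarith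
  simp only [crH]
  rw [div_sub_div _ _ (ne_of_gt d1) (ne_of_gt d2), le_div_iff₀ (by positivity)]
  have := mul_le_mul_of_nonneg_left hD (by linarith : (0:ℝ) ≤ ℓ / 3)
  linarith

lemma crG_range_hi {a ℓ : ℝ} (ha : 0 ≤ a) (hℓ : 0 ≤ ℓ) :
    crG a - crG (a + ℓ) ≤ 3 * ℓ / 4 := by
  have d1 : (0:ℝ) < 8 + a := by linarith
  have d2 : (0:ℝ) < 8 + (a + ℓ) := by linarith
  have hD : (64:ℝ) ≤ (8 + a) * (8 + (a + ℓ)) := by nlinarith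
  simp only [crG]
  rw [div_sub_div _ _ (ne_of_gt d1) (ne_of_gt d2), div_le_iff₀ (by positivity)]
  have := mul_le_mul_of_nonneg_left hD (by linarith : (0:ℝ) ≤ 3 * ℓ / 4)
  linarith

lemma crH_range_hi {a ℓ : ℝ} (ha : 0 ≤ a) (hℓ : 0 ≤ ℓ) :
    crH a - crH (a + ℓ) ≤ 3 * ℓ / 4 := by
  have d1 : (0:ℝ) < 2 + a := by linarith
  have d2 : (0:ℝ) < 2 + (a + ℓ) := by linarith
  have hD : (4:ℝ) ≤ (2 + a) * (2 + (a + ℓ)) := by nlinarith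
  simp only [crH]
  rw [div_sub_div _ _ (ne_of_gt d1) (ne_of_gt d2), div_le_iff₀ (by positivity)]
  have := mul_le_mul_of_nonneg_left hD (by linarith : (0:ℝ) ≤ 3 * ℓ / 4)
  linarith

lemma crG_mid {a ℓ : ℝ} (ha : 0 ≤ a) (hℓ : 0 ≤ ℓ) :
    crG (a + ℓ / 3) - crG (a + 2 * ℓ / 3) ≤ ℓ / 4 := by
  have d1 : (0:ℝ) < 8 + (a + ℓ / 3) := by linarith
  have d2 : (0:ℝ) < 8 + (a + 2 * ℓ / 3) := by linarith
  have hD : (64:ℝ) ≤ (8 + (a + ℓ / 3)) * (8 + (a + 2 * ℓ / 3)) := by nlinarith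
  simp only [crG]
  rw [div_sub_div _ _ (ne_of_gt d1) (ne_of_gt d2), div_le_iff₀ (by positivity)]
  have := mul_le_mul_of_nonneg_left hD (by linarith : (0:ℝ) ≤ ℓ / 4)
  linarith

lemma crH_mid {a ℓ : ℝ} (ha : 0 ≤ a) (hℓ : 0 ≤ ℓ) :
    crH (a + ℓ / 3) - crH (a + 2 * ℓ / 3) ≤ ℓ / 4 := by
  have d1 : (0:ℝ) < 2 + (a + ℓ / 3) := by linarith
  have d2 : (0:ℝ) < 2 + (a + 2 * ℓ / 3) := by linarith
  have hD : (4:ℝ) ≤ (2 + (a + ℓ / 3)) * (2 + (a + 2 * ℓ / 3)) := by nlinarith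
  simp only [crH]
  rw [div_sub_div _ _ (ne_of_gt d1) (ne_of_gt d2), div_le_iff₀ (by positivity)]
  have := mul_le_mul_of_nonneg_left hD (by linarith : (0:ℝ) ≤ ℓ / 4)
  linarith

/-- Split one coordinate's cylinder into a child third, keeping `y` trapped. -/
lemma crCoordStep (φ : ℝ → ℝ) (k : ℕ) (a y Rlo Rhi : ℝ) (ha : crP k a)
    (hmid : φ (a + crL k / 3) - φ (a + 2 * crL k / 3) ≤ Rhi - Rlo)
    (h1 : Rlo + φ (a + crL k) ≤ y) (h2 : y ≤ Rhi + φ a) :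
    ∃ b, crP (k+1) b ∧ Rlo + φ (b + crL (k+1)) ≤ y ∧ y ≤ Rhi + φ b := by
  by_cases hc : y ≤ Rhi + φ (a + 2 * crL k / 3)
  · refine ⟨a + 2 * crL k / 3, ⟨a, ha, Or.inr rfl⟩, ?_, hc⟩
    have e : a + 2 * crL k / 3 + crL (k+1) = a + crL k := by rw [crL_succ]; ring
    rw [e]; exact h1
  · refine ⟨a, ⟨a, ha, Or.inl rfl⟩, ?_, h2⟩
    have e : a + crL (k+1) = a + crL k / 3 := by rw [crL_succ]
    rw [e]
    push_neg at hc
    linarith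
lemma crMacro (y : ℝ) (k : ℕ) (a₁ a₂ a₃ a₄ : ℝ)
    (h1 : crP k a₁) (h2 : crP k a₂) (h3 : crP k a₃) (h4 : crP k a₄)
    (hlo : crG (a₁ + crL k) + crH (a₂ + crL k) + crH (a₃ + crL k) + crH (a₄ + crL k) ≤ y)
    (hhi : y ≤ crG a₁ + crH a₂ + crH a₃ + crH a₄) :
    ∃ b₁ b₂ b₃ b₄, crP (k+1) b₁ ∧ crP (k+1) b₂ ∧ crP (k+1) b₃ ∧ crP (k+1) b₄ ∧
      crG (b₁ + crL (k+1)) + crH (b₂ + crL (k+1)) + crH (b₃ + crL (k+1))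
        + crH (b₄ + crL (k+1)) ≤ y ∧
      y ≤ crG b₁ + crH b₂ + crH b₃ + crH b₄ := by
  have hL := crL_pos k
  have hL' := crL_pos (k+1)
  have hLs : crL (k+1) = crL k / 3 := crL_succ k
  obtain ⟨ha10, ha11⟩ := crP_bounds k a₁ h1
  obtain ⟨ha20, ha21⟩ := crP_bounds k a₂ h2
  obtain ⟨ha30, ha31⟩ := crP_bounds k a₃ h3
  obtain ⟨ha40, ha41⟩ := crP_bounds k a₄ h4
  -- split coordinate 1
  obtain ⟨b₁, hb1P, hb1lo, hb1hi⟩ :=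
    crCoordStep crG k a₁ y (crH (a₂ + crL k) + crH (a₃ + crL k) + crH (a₄ + crL k))
      (crH a₂ + crH a₃ + crH a₄) h1
      (by
        have hm := crG_mid ha10 hL.le
        have r2 := crH_range_lo ha20 hL.le ha21
        have r3 := crH_range_lo ha30 hL.le ha31
        have r4 := crH_range_lo ha40 hL.le ha41
        linarith)
      (by linarith) (by linarith)
  obtain ⟨hb10, hb11⟩ := crP_bounds (k+1) b₁ hb1P
  -- split coordinate 2
  obtain ⟨b₂, hb2P, hb2lo, hb2hi⟩ :=
    crCoordStep crH k a₂ y (crG (b₁ + crL (k+1)) + crH (a₃ + crL k) + crH (a₄ + crL k))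
      (crG b₁ + crH a₃ + crH a₄) h2
      (by
        have hm := crH_mid ha20 hL.le
        have r1 := crG_range_lo hb10 hL'.le hb11
        have r3 := crH_range_lo ha30 hL.le ha31
        have r4 := crH_range_lo ha40 hL.le ha41
        linarith)
      (by linarith) (by linarith)
  obtain ⟨hb20, hb21⟩ := crP_bounds (k+1) b₂ hb2P
  -- split coordinate 3
  obtain ⟨b₃, hb3P, hb3lo, hb3hi⟩ :=
    crCoordStep crH k a₃ y (crG (b₁ + crL (k+1)) + crH (b₂ + crL (k+1)) + crH (a₄ + crL k))
      (crG b₁ + crH b₂ + crH a₄) h3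
      (by
        have hm := crH_mid ha30 hL.le
        have r1 := crG_range_lo hb10 hL'.le hb11
        have r2 := crH_range_lo hb20 hL'.le hb21
        have r4 := crH_range_lo ha40 hL.le ha41
        linarith)
      (by linarith) (by linarith)
  obtain ⟨hb30, hb31⟩ := crP_bounds (k+1) b₃ hb3P
  -- split coordinate 4
  obtain ⟨b₄, hb4P, hb4lo, hb4hi⟩ :=
    crCoordStep crH k a₄ y (crG (b₁ + crL (k+1)) + crH (b₂ + crL (k+1)) + crH (b₃ + crL (k+1)))
      (crG b₁ + crH b₂ + crH b₃) h4
      (by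
        have hm := crH_mid ha40 hL.le
        have r1 := crG_range_lo hb10 hL'.le hb11
        have r2 := crH_range_lo hb20 hL'.le hb21
        have r3 := crH_range_lo hb30 hL'.le hb31
        linarith)
      (by linarith) (by linarith)
  exact ⟨b₁, b₂, b₃, b₄, hb1P, hb2P, hb3P, hb4P, by linarith, by linarith⟩

lemma crApprox (y : ℝ) (hy : y ∈ Set.Icc (6:ℝ) (63/8)) (n : ℕ) :
    ∃ a₁ a₂ a₃ a₄, crP n a₁ ∧ crP n a₂ ∧ crP n a₃ ∧ crP n a₄ ∧
      crG (a₁ + crL n) + crH (a₂ + crL n) + crH (a₃ + crL n) + crH (a₄ + crL n) ≤ y ∧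
      y ≤ crG a₁ + crH a₂ + crH a₃ + crH a₄ := by
  induction n with
  | zero =>
    refine ⟨0, 0, 0, 0, rfl, rfl, rfl, rfl, ?_, ?_⟩
    · simp only [crG, crH, crL, pow_zero]
      norm_num
      linarith [hy.1]
    · simp only [crG, crH]
      norm_num
      linarith [hy.2]
  | succ n ih =>
    obtain ⟨a₁, a₂, a₃, a₄, h1, h2, h3, h4, hlo, hhi⟩ := ih
    exact crMacro y n a₁ a₂ a₃ a₄ h1 h2 h3 h4 hlo hhi
theorem four_reciprocals_cantorSet_supset_Icc_six :
    Set.Icc (6 : ℝ) (63 / 8) ⊆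
      {y : ℝ | ∃ x₁ ∈ cantorSet ∩ Set.Icc (8 / 27 : ℝ) (1 / 3),
        ∃ x₂ ∈ cantorSet ∩ Set.Icc (2 / 3 : ℝ) 1,
        ∃ x₃ ∈ cantorSet ∩ Set.Icc (2 / 3 : ℝ) 1,
        ∃ x₄ ∈ cantorSet ∩ Set.Icc (2 / 3 : ℝ) 1,
        y = 1 / x₁ + 1 / x₂ + 1 / x₃ + 1 / x₄} := by
  intro y hy
  set A : Set ℝ := cantorSet ∩ Set.Icc (8 / 27 : ℝ) (1 / 3) with hA_def
  set B : Set ℝ := cantorSet ∩ Set.Icc (2 / 3 : ℝ) 1 with hB_def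
  set f : ℝ × ℝ × ℝ × ℝ → ℝ :=
    fun p => 1 / p.1 + 1 / p.2.1 + 1 / p.2.2.1 + 1 / p.2.2.2 with hf_def
  set K : Set (ℝ × ℝ × ℝ × ℝ) := A ×ˢ B ×ˢ B ×ˢ B with hK_def
  have hAc : IsCompact A := isCompact_cantorSet.inter_right isClosed_Icc
  have hBc : IsCompact B := isCompact_cantorSet.inter_right isClosed_Icc
  have hKc : IsCompact K := hAc.prod (hBc.prod (hBc.prod hBc))
  have hf : ContinuousOn f K := by
    have c1 : ContinuousOn (fun p : ℝ × ℝ × ℝ × ℝ => 1 / p.1) K := by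
      apply ContinuousOn.div continuousOn_const continuous_fst.continuousOn
      intro p hp
      have h8 : (8 / 27 : ℝ) ≤ p.1 := hp.1.2.1
      exact ne_of_gt (by linarith)
    have c2 : ContinuousOn (fun p : ℝ × ℝ × ℝ × ℝ => 1 / p.2.1) K := by
      apply ContinuousOn.div continuousOn_const
        (continuous_fst.comp continuous_snd).continuousOn
      intro p hp
      have h8 : (2 / 3 : ℝ) ≤ p.2.1 := hp.2.1.2.1
      simp only [Function.comp_apply]
      exact ne_of_gt (by linarith)
    have c3 : ContinuousOn (fun p : ℝ × ℝ × ℝ × ℝ => 1 / p.2.2.1) K := by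
      apply ContinuousOn.div continuousOn_const
        (continuous_fst.comp (continuous_snd.comp continuous_snd)).continuousOn
      intro p hp
      have h8 : (2 / 3 : ℝ) ≤ p.2.2.1 := hp.2.2.1.2.1
      simp only [Function.comp_apply]
      exact ne_of_gt (by linarith)
    have c4 : ContinuousOn (fun p : ℝ × ℝ × ℝ × ℝ => 1 / p.2.2.2) K := by
      apply ContinuousOn.div continuousOn_const
        (continuous_snd.comp (continuous_snd.comp continuous_snd)).continuousOn
      intro p hp
      have h8 : (2 / 3 : ℝ) ≤ p.2.2.2 := hp.2.2.2.2.1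
      simp only [Function.comp_apply]
      exact ne_of_gt (by linarith)
    exact ((c1.add c2).add c3).add c4
  have hTc : IsCompact (f '' K) := hKc.image_of_continuousOn hf
  have hyT : y ∈ f '' K := by
    rw [← hTc.isClosed.closure_eq, Metric.mem_closure_iff]
    intro ε hε
    obtain ⟨n, hn⟩ := exists_pow_lt_of_lt_one (show (0:ℝ) < ε / 3 by linarith)
      (by norm_num : (1/3 : ℝ) < 1)
    obtain ⟨a₁, a₂, a₃, a₄, h1, h2, h3, h4, hlo, hhi⟩ := crApprox y hy n
    have hL := crL_pos n
    obtain ⟨ha10, ha11⟩ := crP_bounds n a₁ h1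
    obtain ⟨ha20, ha21⟩ := crP_bounds n a₂ h2
    obtain ⟨ha30, ha31⟩ := crP_bounds n a₃ h3
    obtain ⟨ha40, ha41⟩ := crP_bounds n a₄ h4
    refine ⟨crG a₁ + crH a₂ + crH a₃ + crH a₄, ?_, ?_⟩
    · refine ⟨((8 + a₁) / 27, (2 + a₂) / 3, (2 + a₃) / 3, (2 + a₄) / 3), ?_, ?_⟩
      · have m1 : (8 + a₁) / 27 ∈ cantorSet := by
          have h := crDiv3_mem (crTwoAdd_mem (crTwoAdd_mem (crP_mem h1)))
          have e : (2 + (2 + a₁) / 3) / 3 / 3 = (8 + a₁) / 27 := by ring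
          rwa [e] at h
        have m2 : (2 + a₂) / 3 ∈ cantorSet := crTwoAdd_mem (crP_mem h2)
        have m3 : (2 + a₃) / 3 ∈ cantorSet := crTwoAdd_mem (crP_mem h3)
        have m4 : (2 + a₄) / 3 ∈ cantorSet := crTwoAdd_mem (crP_mem h4)
        refine ⟨⟨m1, ?_, ?_⟩, ⟨m2, ?_, ?_⟩, ⟨m3, ?_, ?_⟩, ⟨m4, ?_, ?_⟩⟩ <;> linarith
      · simp only [hf_def, crG, crH]
        rw [one_div_div, one_div_div, one_div_div, one_div_div]
    · have r1 := crG_range_hi ha10 hL.le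
      have r2 := crH_range_hi ha20 hL.le
      have r3 := crH_range_hi ha30 hL.le
      have r4 := crH_range_hi ha40 hL.le
      have hLn : crL n = (1/3 : ℝ) ^ n := rfl
      rw [Real.dist_eq, abs_of_nonpos (by linarith)]
      linarith
  obtain ⟨p, hp, hfp⟩ := hyT
  exact ⟨p.1, hp.1, p.2.1, hp.2.1, p.2.2.1, hp.2.2.1, p.2.2.2, hp.2.2.2, hfp.symm⟩
end

section
/- Let C be the middle-third Cantor set. Then {1/x₁ + 1/x₂ + 1/x₃ + 1/x₄ : x₁ ∈ C ∩ [6/27, 7/27], x₂, x₃, x₄ ∈ C ∩ [2/3, 1]} ⊇ [81/19 + 1 + 18/7, 3 + 9/8 + 81/18]. -/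
open Set Filter Topology

namespace FourRecip

lemma div3_mem {t : ℝ} (ht : t ∈ cantorSet) : t / 3 ∈ cantorSet := by
  rw [cantorSet, Set.mem_iInter]
  intro n
  match n with
  | 0 =>
    have h := cantorSet_subset_unitInterval ht
    simp only [preCantorSet_zero, Set.mem_Icc] at *
    constructor <;> linarith [h.1, h.2]
  | n + 1 =>
    exact Or.inl ⟨t, Set.mem_iInter.mp ht n, rfl⟩

lemma two_add_div3_mem {t : ℝ} (ht : t ∈ cantorSet) : (2 + t) / 3 ∈ cantorSet := by
  rw [cantorSet, Set.mem_iInter]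
  intro n
  match n with
  | 0 =>
    have h := cantorSet_subset_unitInterval ht
    simp only [preCantorSet_zero, Set.mem_Icc] at *
    constructor <;> linarith [h.1, h.2]
  | n + 1 =>
    exact Or.inr ⟨t, Set.mem_iInter.mp ht n, rfl⟩

lemma digit_mono (p : ℕ → ℝ)
    (hstep : ∀ n, p (n+1) = p n ∨ p (n+1) = p n + 2/3^(n+1)) : Monotone p := by
  apply monotone_nat_of_le_succ
  intro n
  rcases hstep n with h | h <;> rw [h]
  · have : (0:ℝ) < 2/3^(n+1) := by positivity
    linarith

lemma digit_bound (p : ℕ → ℝ)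
    (hstep : ∀ n, p (n+1) = p n ∨ p (n+1) = p n + 2/3^(n+1)) :
    ∀ n m, p (n + m) ≤ p n + 1/3^n - 1/3^(n+m) := by
  intro n m
  induction m with
  | zero => simp
  | succ m ih =>
    set t : ℝ := 1/3^(n+m+1) with ht
    have key : (1:ℝ)/3^(n+m) = 3*t := by rw [ht, pow_succ]; ring
    have key2 : (2:ℝ)/3^(n+m+1) = 2*t := by rw [ht]; ring
    have h := hstep (n+m)
    have e : n + (m+1) = (n+m) + 1 := by ring
    rw [e]
    have hpos : (0:ℝ) < t := by rw [ht]; positivity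
    rcases h with h | h <;> rw [h] <;> linarith [ih, key, key2, hpos]

lemma mem_pre_of_digits : ∀ (k : ℕ) (p : ℕ → ℝ) (x : ℝ), p 0 = 0 →
    (∀ n, p (n+1) = p n ∨ p (n+1) = p n + 2/3^(n+1)) →
    Tendsto p atTop (𝓝 x) → x ∈ preCantorSet k := by
  intro k
  induction k with
  | zero =>
    intro p x h0 hstep htend
    have hmono : Monotone p := digit_mono p hstep
    have hub : ∀ m, p m ≤ 1 := by
      intro m
      have := digit_bound p hstep 0 m
      simp only [Nat.zero_add, pow_zero] at this
      have hpos : (0:ℝ) < 1/3^m := by positivity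
      rw [h0] at this
      linarith
    have h1 : x ≤ 1 := le_of_tendsto' htend hub
    have h2 : 0 ≤ x := ge_of_tendsto' htend (fun m => h0 ▸ hmono (Nat.zero_le m))
    exact ⟨h2, h1⟩
  | succ k ih =>
    intro p x h0 hstep htend
    set q : ℕ → ℝ := fun m => 3 * (p (m+1) - p 1) with hq
    have hq0 : q 0 = 0 := by simp [hq]
    have hqstep : ∀ n, q (n+1) = q n ∨ q (n+1) = q n + 2/3^(n+1) := by
      intro n
      rcases hstep (n+1) with h | h
      · left; simp only [hq]; rw [h]
      · right; simp only [hq]; rw [h, pow_succ]; ring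
    have hqt : Tendsto q atTop (𝓝 (3 * (x - p 1))) := by
      have h1 : Tendsto (fun m => p (m+1)) atTop (𝓝 x) :=
        htend.comp (tendsto_add_atTop_nat 1)
      exact ((h1.sub_const (p 1)).const_mul 3)
    have hx' := ih q (3 * (x - p 1)) hq0 hqstep hqt
    rcases hstep 0 with h | h
    · rw [h0] at h
      exact Or.inl ⟨3 * (x - p 1), hx', by rw [h]; ring⟩
    · rw [h0] at h
      norm_num at h
      exact Or.inr ⟨3 * (x - p 1), hx', by rw [h]; ring⟩

lemma limit_of_digits (p : ℕ → ℝ) (h0 : p 0 = 0)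
    (hstep : ∀ n, p (n+1) = p n ∨ p (n+1) = p n + 2/3^(n+1)) :
    ∃ x ∈ cantorSet, Tendsto p atTop (𝓝 x) ∧ ∀ n, p n ≤ x ∧ x ≤ p n + 1/3^n := by
  have hmono : Monotone p := digit_mono p hstep
  have hbdd : BddAbove (Set.range p) := by
    refine ⟨1, ?_⟩
    rintro _ ⟨m, rfl⟩
    have := digit_bound p hstep 0 m
    simp only [Nat.zero_add, pow_zero] at this
    have hpos : (0:ℝ) < 1/3^m := by positivity
    rw [h0] at this; linarith
  have htend : Tendsto p atTop (𝓝 (⨆ n, p n)) := tendsto_atTop_ciSup hmono hbdd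
  refine ⟨⨆ n, p n, ?_, htend, ?_⟩
  · rw [cantorSet, Set.mem_iInter]
    intro k
    exact mem_pre_of_digits k p _ h0 hstep htend
  · intro n
    constructor
    · exact le_ciSup hbdd n
    · apply ciSup_le
      intro m
      rcases le_total m n with h | h
      · have h1 : (0:ℝ) < 1/3^n := by positivity
        have := hmono h
        linarith
      · have := digit_bound p hstep n (m - n)
        rw [Nat.add_sub_cancel' h] at this
        have h1 : (0:ℝ) < 1/3^m := by positivity
        linarith

noncomputable def f (a b c d : ℝ) : ℝ := 27/(6+a) + 3/(2+b) + 3/(2+c) + 3/(2+d)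

lemma gdrop_le (s t : ℝ) (hs : 0 ≤ s) (hst : s ≤ t) :
    3/(2+s) - 3/(2+t) ≤ 3*(t-s)/4 := by
  have h1 : (0:ℝ) < 2 + s := by linarith
  have h2 : (0:ℝ) < 2 + t := by linarith
  have e : 3/(2+s) - 3/(2+t) = 3*(t-s)/((2+s)*(2+t)) := by
    field_simp; ring
  rw [e]
  gcongr
  · nlinarith

lemma gdrop_ge (s t : ℝ) (hs : 0 ≤ s) (hst : s ≤ t) (ht : t ≤ 1) :
    (t-s)/3 ≤ 3/(2+s) - 3/(2+t) := by
  have h1 : (0:ℝ) < 2 + s := by linarith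
  have h2 : (0:ℝ) < 2 + t := by linarith
  have e : 3/(2+s) - 3/(2+t) = 3*(t-s)/((2+s)*(2+t)) := by
    field_simp; ring
  rw [e, div_le_div_iff₀ (by norm_num) (by positivity)]
  have hD : (2+s)*(2+t) ≤ 9 := by nlinarith
  have hts : 0 ≤ t - s := by linarith
  nlinarith [mul_le_mul_of_nonneg_left hD hts]

lemma g1drop_le (s t : ℝ) (hs : 0 ≤ s) (hst : s ≤ t) :
    27/(6+s) - 27/(6+t) ≤ 3*(t-s)/4 := by
  have h1 : (0:ℝ) < 6 + s := by linarith
  have h2 : (0:ℝ) < 6 + t := by linarith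
  have e : 27/(6+s) - 27/(6+t) = 27*(t-s)/((6+s)*(6+t)) := by
    field_simp; ring
  rw [e, div_le_div_iff₀ (by positivity) (by norm_num)]
  have hD : 36 ≤ (6+s)*(6+t) := by nlinarith
  have hts : 0 ≤ t - s := by linarith
  nlinarith [mul_le_mul_of_nonneg_left hD hts]

lemma g1drop_ge (s t : ℝ) (hs : 0 ≤ s) (hst : s ≤ t) (ht : t ≤ 1) :
    27*(t-s)/49 ≤ 27/(6+s) - 27/(6+t) := by
  have h1 : (0:ℝ) < 6 + s := by linarith
  have h2 : (0:ℝ) < 6 + t := by linarith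
  have e : 27/(6+s) - 27/(6+t) = 27*(t-s)/((6+s)*(6+t)) := by
    field_simp; ring
  rw [e, div_le_div_iff₀ (by norm_num) (by positivity)]
  have hD : (6+s)*(6+t) ≤ 49 := by nlinarith
  have hts : 0 ≤ t - s := by linarith
  nlinarith [mul_le_mul_of_nonneg_left hD hts]

lemma step_a (y a b c d wb wc wd h : ℝ) (hh : 0 < h)
    (ha0 : 0 ≤ a) (ha1 : a + h ≤ 1)
    (hb0 : 0 ≤ b) (hb1 : b + wb ≤ 1) (hwb : h/3 ≤ wb)
    (hc0 : 0 ≤ c) (hc1 : c + wc ≤ 1) (hwc : h/3 ≤ wc)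
    (hd0 : 0 ≤ d) (hd1 : d + wd ≤ 1) (hwd : h/3 ≤ wd)
    (hlo : f (a+h) (b+wb) (c+wc) (d+wd) ≤ y) (hhi : y ≤ f a b c d) :
    ∃ a', (a' = a ∨ a' = a + 2*h/3) ∧
      f (a'+h/3) (b+wb) (c+wc) (d+wd) ≤ y ∧ y ≤ f a' b c d := by
  by_cases hcase : f (a+h/3) (b+wb) (c+wc) (d+wd) ≤ y
  · exact ⟨a, Or.inl rfl, hcase, hhi⟩
  · push_neg at hcase
    refine ⟨a + 2*h/3, Or.inr rfl, ?_, ?_⟩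
    · have e : a + 2*h/3 + h/3 = a + h := by ring
      rw [e]; exact hlo
    · have key : f (a+h/3) (b+wb) (c+wc) (d+wd) ≤ f (a+2*h/3) b c d := by
        have h1 := g1drop_le (a+h/3) (a+2*h/3) (by linarith) (by linarith)
        have h2 := gdrop_ge b (b+wb) hb0 (by linarith) hb1
        have h3 := gdrop_ge c (c+wc) hc0 (by linarith) hc1
        have h4 := gdrop_ge d (d+wd) hd0 (by linarith) hd1
        simp only [f]
        linarith
      linarith

lemma step_b (y a b c d wa wc wd h : ℝ) (hh : 0 < h)
    (ha0 : 0 ≤ a) (ha1 : a + wa ≤ 1) (hwa : h/3 ≤ wa)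
    (hb0 : 0 ≤ b) (hb1 : b + h ≤ 1)
    (hc0 : 0 ≤ c) (hc1 : c + wc ≤ 1) (hwc : h/3 ≤ wc)
    (hd0 : 0 ≤ d) (hd1 : d + wd ≤ 1) (hwd : h/3 ≤ wd)
    (hlo : f (a+wa) (b+h) (c+wc) (d+wd) ≤ y) (hhi : y ≤ f a b c d) :
    ∃ b', (b' = b ∨ b' = b + 2*h/3) ∧
      f (a+wa) (b'+h/3) (c+wc) (d+wd) ≤ y ∧ y ≤ f a b' c d := by
  by_cases hcase : f (a+wa) (b+h/3) (c+wc) (d+wd) ≤ y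
  · exact ⟨b, Or.inl rfl, hcase, hhi⟩
  · push_neg at hcase
    refine ⟨b + 2*h/3, Or.inr rfl, ?_, ?_⟩
    · have e : b + 2*h/3 + h/3 = b + h := by ring
      rw [e]; exact hlo
    · have key : f (a+wa) (b+h/3) (c+wc) (d+wd) ≤ f a (b+2*h/3) c d := by
        have h1 := gdrop_le (b+h/3) (b+2*h/3) (by linarith) (by linarith)
        have h2 := g1drop_ge a (a+wa) ha0 (by linarith) ha1
        have h3 := gdrop_ge c (c+wc) hc0 (by linarith) hc1
        have h4 := gdrop_ge d (d+wd) hd0 (by linarith) hd1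
        simp only [f]
        linarith
      linarith

lemma step_c (y a b c d wa wb wd h : ℝ) (hh : 0 < h)
    (ha0 : 0 ≤ a) (ha1 : a + wa ≤ 1) (hwa : h/3 ≤ wa)
    (hb0 : 0 ≤ b) (hb1 : b + wb ≤ 1) (hwb : h/3 ≤ wb)
    (hc0 : 0 ≤ c) (hc1 : c + h ≤ 1)
    (hd0 : 0 ≤ d) (hd1 : d + wd ≤ 1) (hwd : h/3 ≤ wd)
    (hlo : f (a+wa) (b+wb) (c+h) (d+wd) ≤ y) (hhi : y ≤ f a b c d) :
    ∃ c', (c' = c ∨ c' = c + 2*h/3) ∧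
      f (a+wa) (b+wb) (c'+h/3) (d+wd) ≤ y ∧ y ≤ f a b c' d := by
  by_cases hcase : f (a+wa) (b+wb) (c+h/3) (d+wd) ≤ y
  · exact ⟨c, Or.inl rfl, hcase, hhi⟩
  · push_neg at hcase
    refine ⟨c + 2*h/3, Or.inr rfl, ?_, ?_⟩
    · have e : c + 2*h/3 + h/3 = c + h := by ring
      rw [e]; exact hlo
    · have key : f (a+wa) (b+wb) (c+h/3) (d+wd) ≤ f a b (c+2*h/3) d := by
        have h1 := gdrop_le (c+h/3) (c+2*h/3) (by linarith) (by linarith)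
        have h2 := g1drop_ge a (a+wa) ha0 (by linarith) ha1
        have h3 := gdrop_ge b (b+wb) hb0 (by linarith) hb1
        have h4 := gdrop_ge d (d+wd) hd0 (by linarith) hd1
        simp only [f]
        linarith
      linarith

lemma step_d (y a b c d wa wb wc h : ℝ) (hh : 0 < h)
    (ha0 : 0 ≤ a) (ha1 : a + wa ≤ 1) (hwa : h/3 ≤ wa)
    (hb0 : 0 ≤ b) (hb1 : b + wb ≤ 1) (hwb : h/3 ≤ wb)
    (hc0 : 0 ≤ c) (hc1 : c + wc ≤ 1) (hwc : h/3 ≤ wc)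
    (hd0 : 0 ≤ d) (hd1 : d + h ≤ 1)
    (hlo : f (a+wa) (b+wb) (c+wc) (d+h) ≤ y) (hhi : y ≤ f a b c d) :
    ∃ d', (d' = d ∨ d' = d + 2*h/3) ∧
      f (a+wa) (b+wb) (c+wc) (d'+h/3) ≤ y ∧ y ≤ f a b c d' := by
  by_cases hcase : f (a+wa) (b+wb) (c+wc) (d+h/3) ≤ y
  · exact ⟨d, Or.inl rfl, hcase, hhi⟩
  · push_neg at hcase
    refine ⟨d + 2*h/3, Or.inr rfl, ?_, ?_⟩
    · have e : d + 2*h/3 + h/3 = d + h := by ring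
      rw [e]; exact hlo
    · have key : f (a+wa) (b+wb) (c+wc) (d+h/3) ≤ f a b c (d+2*h/3) := by
        have h1 := gdrop_le (d+h/3) (d+2*h/3) (by linarith) (by linarith)
        have h2 := g1drop_ge a (a+wa) ha0 (by linarith) ha1
        have h3 := gdrop_ge b (b+wb) hb0 (by linarith) hb1
        have h4 := gdrop_ge c (c+wc) hc0 (by linarith) hc1
        simp only [f]
        linarith
      linarith

lemma step_all (y a b c d h : ℝ) (hh : 0 < h)
    (ha0 : 0 ≤ a) (ha1 : a + h ≤ 1)
    (hb0 : 0 ≤ b) (hb1 : b + h ≤ 1)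
    (hc0 : 0 ≤ c) (hc1 : c + h ≤ 1)
    (hd0 : 0 ≤ d) (hd1 : d + h ≤ 1)
    (hlo : f (a+h) (b+h) (c+h) (d+h) ≤ y) (hhi : y ≤ f a b c d) :
    ∃ a' b' c' d',
      (a' = a ∨ a' = a + 2*h/3) ∧ (b' = b ∨ b' = b + 2*h/3) ∧
      (c' = c ∨ c' = c + 2*h/3) ∧ (d' = d ∨ d' = d + 2*h/3) ∧
      f (a'+h/3) (b'+h/3) (c'+h/3) (d'+h/3) ≤ y ∧ y ≤ f a' b' c' d' := by
  have hw : h/3 ≤ h := by linarith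
  obtain ⟨a', haa, hlo1, hhi1⟩ :=
    step_a y a b c d h h h h hh ha0 ha1 hb0 hb1 hw hc0 hc1 hw hd0 hd1 hw hlo hhi
  have ha'0 : 0 ≤ a' := by rcases haa with rfl | rfl <;> linarith
  have ha'1 : a' + h/3 ≤ 1 := by rcases haa with rfl | rfl <;> linarith
  obtain ⟨b', hbb, hlo2, hhi2⟩ :=
    step_b y a' b c d (h/3) h h h hh ha'0 ha'1 (le_refl _) hb0 hb1
      hc0 hc1 hw hd0 hd1 hw hlo1 hhi1
  have hb'0 : 0 ≤ b' := by rcases hbb with rfl | rfl <;> linarith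
  have hb'1 : b' + h/3 ≤ 1 := by rcases hbb with rfl | rfl <;> linarith
  obtain ⟨c', hcc, hlo3, hhi3⟩ :=
    step_c y a' b' c d (h/3) (h/3) h h hh ha'0 ha'1 (le_refl _) hb'0 hb'1 (le_refl _)
      hc0 hc1 hd0 hd1 hw hlo2 hhi2
  have hc'0 : 0 ≤ c' := by rcases hcc with rfl | rfl <;> linarith
  have hc'1 : c' + h/3 ≤ 1 := by rcases hcc with rfl | rfl <;> linarith
  obtain ⟨d', hdd, hlo4, hhi4⟩ :=
    step_d y a' b' c' d (h/3) (h/3) (h/3) h hh ha'0 ha'1 (le_refl _) hb'0 hb'1 (le_refl _)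
      hc'0 hc'1 (le_refl _) hd0 hd1 hlo3 hhi3
  exact ⟨a', b', c', d', haa, hbb, hcc, hdd, hlo4, hhi4⟩

def InvT (y : ℝ) (n : ℕ) (q : ℝ × ℝ × ℝ × ℝ) : Prop :=
  0 ≤ q.1 ∧ q.1 + 1/3^n ≤ 1 ∧ 0 ≤ q.2.1 ∧ q.2.1 + 1/3^n ≤ 1 ∧
  0 ≤ q.2.2.1 ∧ q.2.2.1 + 1/3^n ≤ 1 ∧ 0 ≤ q.2.2.2 ∧ q.2.2.2 + 1/3^n ≤ 1 ∧
  f (q.1 + 1/3^n) (q.2.1 + 1/3^n) (q.2.2.1 + 1/3^n) (q.2.2.2 + 1/3^n) ≤ y ∧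
  y ≤ f q.1 q.2.1 q.2.2.1 q.2.2.2

def RelT (n : ℕ) (q q' : ℝ × ℝ × ℝ × ℝ) : Prop :=
  (q'.1 = q.1 ∨ q'.1 = q.1 + 2/3^(n+1)) ∧
  (q'.2.1 = q.2.1 ∨ q'.2.1 = q.2.1 + 2/3^(n+1)) ∧
  (q'.2.2.1 = q.2.2.1 ∨ q'.2.2.1 = q.2.2.1 + 2/3^(n+1)) ∧
  (q'.2.2.2 = q.2.2.2 ∨ q'.2.2.2 = q.2.2.2 + 2/3^(n+1))

lemma inv_zero (y : ℝ) (hy1 : (81/19 + 1 + 18/7 : ℝ) ≤ y) (hy2 : y ≤ (3 + 9/8 + 81/18 : ℝ)) :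
    InvT y 0 (0, 0, 0, 0) := by
  simp only [InvT, f]
  norm_num
  constructor <;> linarith

lemma inv_step (y : ℝ) (n : ℕ) (q : ℝ × ℝ × ℝ × ℝ) (hq : InvT y n q) :
    ∃ q', InvT y (n+1) q' ∧ RelT n q q' := by
  obtain ⟨a, b, c, d⟩ := q
  simp only [InvT] at hq
  obtain ⟨ha0, ha1, hb0, hb1, hc0, hc1, hd0, hd1, hlo, hhi⟩ := hq
  have hh : (0:ℝ) < 1/3^n := by positivity
  obtain ⟨a', b', c', d', haa, hbb, hcc, hdd, hlo', hhi'⟩ :=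
    step_all y a b c d (1/3^n) hh ha0 ha1 hb0 hb1 hc0 hc1 hd0 hd1 hlo hhi
  have e1 : (1:ℝ)/3^(n+1) = 1/3^n/3 := by rw [pow_succ]; ring
  have e2 : (2:ℝ)/3^(n+1) = 2*(1/3^n)/3 := by rw [pow_succ]; ring
  refine ⟨(a', b', c', d'), ?_, ?_⟩
  · simp only [InvT]
    rw [e1]
    refine ⟨?_, ?_, ?_, ?_, ?_, ?_, ?_, ?_, hlo', hhi'⟩
    · rcases haa with rfl | rfl <;> linarith
    · rcases haa with rfl | rfl <;> linarith
    · rcases hbb with rfl | rfl <;> linarith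
    · rcases hbb with rfl | rfl <;> linarith
    · rcases hcc with rfl | rfl <;> linarith
    · rcases hcc with rfl | rfl <;> linarith
    · rcases hdd with rfl | rfl <;> linarith
    · rcases hdd with rfl | rfl <;> linarith
  · simp only [RelT]
    rw [e2]
    exact ⟨haa, hbb, hcc, hdd⟩

noncomputable def seqAux (y : ℝ) (hy1 : (81/19 + 1 + 18/7 : ℝ) ≤ y)
    (hy2 : y ≤ (3 + 9/8 + 81/18 : ℝ)) :
    (n : ℕ) → {q : ℝ × ℝ × ℝ × ℝ // InvT y n q}
  | 0 => ⟨(0, 0, 0, 0), inv_zero y hy1 hy2⟩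
  | n+1 => ⟨(inv_step y n (seqAux y hy1 hy2 n).1 (seqAux y hy1 hy2 n).2).choose,
            (inv_step y n (seqAux y hy1 hy2 n).1 (seqAux y hy1 hy2 n).2).choose_spec.1⟩

lemma seq_rel (y : ℝ) (hy1 : (81/19 + 1 + 18/7 : ℝ) ≤ y)
    (hy2 : y ≤ (3 + 9/8 + 81/18 : ℝ)) (n : ℕ) :
    RelT n (seqAux y hy1 hy2 n).1 (seqAux y hy1 hy2 (n+1)).1 :=
  (inv_step y n (seqAux y hy1 hy2 n).1 (seqAux y hy1 hy2 n).2).choose_spec.2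

lemma seq_zero (y : ℝ) (hy1 : (81/19 + 1 + 18/7 : ℝ) ≤ y)
    (hy2 : y ≤ (3 + 9/8 + 81/18 : ℝ)) :
    (seqAux y hy1 hy2 0).1 = (0, 0, 0, 0) := rfl

end FourRecip

open FourRecip in
theorem four_reciprocals_cantorSet_supset_Icc_M :
    Set.Icc (81 / 19 + 1 + 18 / 7 : ℝ) (3 + 9 / 8 + 81 / 18 : ℝ) ⊆
      {y : ℝ | ∃ x₁ ∈ cantorSet ∩ Set.Icc (6 / 27 : ℝ) (7 / 27),
        ∃ x₂ ∈ cantorSet ∩ Set.Icc (2 / 3 : ℝ) 1,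
        ∃ x₃ ∈ cantorSet ∩ Set.Icc (2 / 3 : ℝ) 1,
        ∃ x₄ ∈ cantorSet ∩ Set.Icc (2 / 3 : ℝ) 1,
        y = 1 / x₁ + 1 / x₂ + 1 / x₃ + 1 / x₄} := by
  intro y hy
  have hy1 : (81/19 + 1 + 18/7 : ℝ) ≤ y := hy.1
  have hy2 : y ≤ (3 + 9/8 + 81/18 : ℝ) := hy.2
  have hrel : ∀ n, RelT n (seqAux y hy1 hy2 n).1 (seqAux y hy1 hy2 (n+1)).1 :=
    fun n => seq_rel y hy1 hy2 n
  have hinv : ∀ n, InvT y n (seqAux y hy1 hy2 n).1 := fun n => (seqAux y hy1 hy2 n).2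
  have h0 : (seqAux y hy1 hy2 0).1 = (0, 0, 0, 0) := seq_zero y hy1 hy2
  obtain ⟨xa, hxaC, hta, hba⟩ :=
    limit_of_digits (fun n => (seqAux y hy1 hy2 n).1.1) (by simp [h0]) (fun n => (hrel n).1)
  obtain ⟨xb, hxbC, htb, hbb⟩ :=
    limit_of_digits (fun n => (seqAux y hy1 hy2 n).1.2.1) (by simp [h0]) (fun n => (hrel n).2.1)
  obtain ⟨xc, hxcC, htc, hbc⟩ :=
    limit_of_digits (fun n => (seqAux y hy1 hy2 n).1.2.2.1) (by simp [h0])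
      (fun n => (hrel n).2.2.1)
  obtain ⟨xd, hxdC, htd, hbd⟩ :=
    limit_of_digits (fun n => (seqAux y hy1 hy2 n).1.2.2.2) (by simp [h0])
      (fun n => (hrel n).2.2.2)
  -- bounds on the limits
  have hxa0 : 0 ≤ xa := by have := (hba 0).1; rw [h0] at this; simpa using this
  have hxa1 : xa ≤ 1 := by have := (hba 0).2; rw [h0] at this; simpa using this
  have hxb0 : 0 ≤ xb := by have := (hbb 0).1; rw [h0] at this; simpa using this
  have hxb1 : xb ≤ 1 := by have := (hbb 0).2; rw [h0] at this; simpa using this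
  have hxc0 : 0 ≤ xc := by have := (hbc 0).1; rw [h0] at this; simpa using this
  have hxc1 : xc ≤ 1 := by have := (hbc 0).2; rw [h0] at this; simpa using this
  have hxd0 : 0 ≤ xd := by have := (hbd 0).1; rw [h0] at this; simpa using this
  have hxd1 : xd ≤ 1 := by have := (hbd 0).2; rw [h0] at this; simpa using this
  -- 1/3^n tends to 0
  have t3 : Filter.Tendsto (fun n : ℕ => (1/3^n : ℝ)) Filter.atTop (nhds 0) := by
    have h := tendsto_pow_atTop_nhds_zero_of_lt_one (by norm_num : (0:ℝ) ≤ 1/3)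
      (by norm_num : (1/3 : ℝ) < 1)
    have e : (fun n : ℕ => ((1:ℝ)/3)^n) = fun n : ℕ => (1/3^n : ℝ) := by
      funext n; rw [div_pow, one_pow]
    rwa [e] at h
  have hta' : Filter.Tendsto (fun n : ℕ => (seqAux y hy1 hy2 n).1.1 + 1/3^n)
      Filter.atTop (nhds xa) := by simpa using hta.add t3
  have htb' : Filter.Tendsto (fun n : ℕ => (seqAux y hy1 hy2 n).1.2.1 + 1/3^n)
      Filter.atTop (nhds xb) := by simpa using htb.add t3
  have htc' : Filter.Tendsto (fun n : ℕ => (seqAux y hy1 hy2 n).1.2.2.1 + 1/3^n)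
      Filter.atTop (nhds xc) := by simpa using htc.add t3
  have htd' : Filter.Tendsto (fun n : ℕ => (seqAux y hy1 hy2 n).1.2.2.2 + 1/3^n)
      Filter.atTop (nhds xd) := by simpa using htd.add t3
  have hfa : ∀ (u : ℕ → ℝ) (x : ℝ), 0 ≤ x → Filter.Tendsto u Filter.atTop (nhds x) →
      Filter.Tendsto (fun n => 27/(6 + u n)) Filter.atTop (nhds (27/(6 + x))) := by
    intro u x hx hu
    exact Filter.Tendsto.div tendsto_const_nhds (tendsto_const_nhds.add hu)
      (ne_of_gt (by linarith))
  have hfb : ∀ (u : ℕ → ℝ) (x : ℝ), 0 ≤ x → Filter.Tendsto u Filter.atTop (nhds x) →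
      Filter.Tendsto (fun n => 3/(2 + u n)) Filter.atTop (nhds (3/(2 + x))) := by
    intro u x hx hu
    exact Filter.Tendsto.div tendsto_const_nhds (tendsto_const_nhds.add hu)
      (ne_of_gt (by linarith))
  have tU : Filter.Tendsto (fun n => f (seqAux y hy1 hy2 n).1.1 (seqAux y hy1 hy2 n).1.2.1
      (seqAux y hy1 hy2 n).1.2.2.1 (seqAux y hy1 hy2 n).1.2.2.2)
      Filter.atTop (nhds (f xa xb xc xd)) := by
    simp only [f]
    exact ((((hfa _ xa hxa0 hta).add (hfb _ xb hxb0 htb)).add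
      (hfb _ xc hxc0 htc)).add (hfb _ xd hxd0 htd))
  have tL : Filter.Tendsto (fun n => f ((seqAux y hy1 hy2 n).1.1 + 1/3^n)
      ((seqAux y hy1 hy2 n).1.2.1 + 1/3^n) ((seqAux y hy1 hy2 n).1.2.2.1 + 1/3^n)
      ((seqAux y hy1 hy2 n).1.2.2.2 + 1/3^n))
      Filter.atTop (nhds (f xa xb xc xd)) := by
    simp only [f]
    exact ((((hfa _ xa hxa0 hta').add (hfb _ xb hxb0 htb')).add
      (hfb _ xc hxc0 htc')).add (hfb _ xd hxd0 htd'))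
  have hyU : y ≤ f xa xb xc xd :=
    ge_of_tendsto' tU (fun n => (hinv n).2.2.2.2.2.2.2.2.2)
  have hyL : f xa xb xc xd ≤ y :=
    le_of_tendsto' tL (fun n => (hinv n).2.2.2.2.2.2.2.2.1)
  have hyf : y = f xa xb xc xd := le_antisymm hyU hyL
  refine ⟨(6 + xa)/27, ⟨?_, ?_, ?_⟩, (2 + xb)/3, ⟨two_add_div3_mem hxbC, ?_, ?_⟩,
    (2 + xc)/3, ⟨two_add_div3_mem hxcC, ?_, ?_⟩, (2 + xd)/3, ⟨two_add_div3_mem hxdC, ?_, ?_⟩, ?_⟩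
  · have m1 := div3_mem (two_add_div3_mem (div3_mem hxaC))
    have e : (2 + xa/3)/3/3 = (6 + xa)/27 := by ring
    rwa [e] at m1
  · linarith
  · linarith
  · linarith
  · linarith
  · linarith
  · linarith
  · linarith
  · linarith
  · rw [one_div_div, one_div_div, one_div_div, one_div_div, hyf]
    simp only [f]
end

section
/- Let λ be a real number with 1/3 ≤ λ < (3 − √5)/2 and let K be the attractor of the IFS {x ↦ λx, x ↦ λx + (1−λ)}. Then K/K = ⋃_{k ∈ ℤ} [λ^k(1−λ), λ^k(1−λ)^{-1}] ∪ {0}, i.e., a nonzero real t belongs to K/K if and only if λ^k(1−λ) ≤ t ≤ λ^k(1−λ)^{-1} for some integer k, and 0 ∈ K/K. -/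
open Set Filter

/-- digit choice for the line-intersection argument -/
noncomputable def qsDig (l t c : ℝ) : ℝ × ℝ :=
  if c < -(l*t) then (1-l, 0)
  else if c ≤ l then (0, 0)
  else if c ≤ (1-t)*(1-l)+l then (1-l, 1-l)
  else (0, 1-l)

noncomputable def qsC (l t c0 : ℝ) : ℕ → ℝ
  | 0 => c0
  | n+1 => (qsC l t c0 n + t * (qsDig l t (qsC l t c0 n)).1 - (qsDig l t (qsC l t c0 n)).2) / l

lemma qsDig_cases (l t c : ℝ) :
    ((qsDig l t c).1 = 0 ∨ (qsDig l t c).1 = 1 - l) ∧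
    ((qsDig l t c).2 = 0 ∨ (qsDig l t c).2 = 1 - l) := by
  unfold qsDig; split_ifs <;> simp

lemma qs_step (l t c : ℝ) (hl1 : 1/3 ≤ l) (hl : l < 1/2)
    (ht1 : 1 - l ≤ t) (ht2 : t ≤ 1) (hc : -t ≤ c) (hc2 : c ≤ 1) :
    -t ≤ (c + t * (qsDig l t c).1 - (qsDig l t c).2) / l ∧
      (c + t * (qsDig l t c).1 - (qsDig l t c).2) / l ≤ 1 := by
  have hl0 : (0:ℝ) < l := by linarith
  have hh : (0:ℝ) ≤ (1-t)*(1-2*l) := by nlinarith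
  unfold qsDig
  split_ifs with h1 h2 h3 <;> simp only <;> constructor <;>
    (first
      | (rw [le_div_iff₀ hl0]; nlinarith)
      | (rw [div_le_iff₀ hl0]; nlinarith))

lemma qs_summable (l : ℝ) (hl0 : 0 < l) (hl : l < 1/2) (d : ℕ → ℝ)
    (hd : ∀ n, d n = 0 ∨ d n = 1 - l) : Summable (fun n => l ^ n * d n) := by
  refine Summable.of_nonneg_of_le (fun n => ?_) (fun n => ?_)
    (summable_geometric_of_lt_one hl0.le (by linarith))
  · rcases hd n with h | h <;> rw [h]
    · simp
    · have : (0:ℝ) ≤ 1 - l := by linarith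
      positivity
  · rcases hd n with h | h <;> rw [h] <;> nlinarith [pow_nonneg hl0.le n, pow_pos hl0 n]

lemma qs_digits_mem (l : ℝ) (hl0 : 0 < l) (hl : l < 1/2) (K : Set ℝ)
    (hcl : IsClosed K) (h0K : (0:ℝ) ∈ K)
    (hK0 : ∀ x ∈ K, l * x ∈ K) (hK1 : ∀ x ∈ K, l * x + (1 - l) ∈ K)
    (d : ℕ → ℝ) (hd : ∀ n, d n = 0 ∨ d n = 1 - l) :
    (∑' n, l ^ n * d n) ∈ K := by
  have key : ∀ N : ℕ, ∀ d : ℕ → ℝ, (∀ n, d n = 0 ∨ d n = 1 - l) →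
      (∑ n ∈ Finset.range N, l ^ n * d n) ∈ K := by
    intro N
    induction N with
    | zero => intro d hd; simpa using h0K
    | succ N ih =>
      intro d hd
      have hs : ∑ n ∈ Finset.range (N+1), l ^ n * d n
          = l * (∑ n ∈ Finset.range N, l ^ n * d (n+1)) + d 0 := by
        rw [Finset.sum_range_succ', Finset.mul_sum]
        simp only [pow_zero, one_mul]
        congr 1
        exact Finset.sum_congr rfl (fun i _ => by ring)
      rw [hs]
      rcases hd 0 with h | h
      · rw [h, add_zero]; exact hK0 _ (ih _ (fun n => hd (n+1)))
      · rw [h]; exact hK1 _ (ih _ (fun n => hd (n+1)))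
  have hsum := (qs_summable l hl0 hl d hd).hasSum
  exact hcl.mem_of_tendsto hsum.tendsto_sum_nat
    (Filter.Eventually.of_forall (fun N => key N d hd))

lemma qs_line (l t : ℝ) (hl1 : 1/3 ≤ l) (hl : l < 1/2)
    (ht1 : 1 - l ≤ t) (ht2 : t ≤ 1)
    (K : Set ℝ) (hcl : IsClosed K) (h0K : (0:ℝ) ∈ K)
    (hK0 : ∀ x ∈ K, l * x ∈ K) (hK1 : ∀ x ∈ K, l * x + (1 - l) ∈ K)
    (c0 : ℝ) (hc0 : -t ≤ c0) (hc0' : c0 ≤ 1) :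
    ∃ x ∈ K, ∃ y ∈ K, y = t * x + c0 := by
  have hl0 : (0:ℝ) < l := by linarith
  set C : ℕ → ℝ := qsC l t c0 with hCdef
  set I : ℕ → ℝ := fun n => (qsDig l t (C n)).1 with hIdef
  set J : ℕ → ℝ := fun n => (qsDig l t (C n)).2 with hJdef
  have hCbound : ∀ n, -t ≤ C n ∧ C n ≤ 1 := by
    intro n
    induction n with
    | zero => exact ⟨hc0, hc0'⟩
    | succ n ih =>
      have : C (n+1) = (C n + t * (qsDig l t (C n)).1 - (qsDig l t (C n)).2) / l := rfl
      rw [this]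
      exact qs_step l t (C n) hl1 hl ht1 ht2 ih.1 ih.2
  have hI : ∀ n, I n = 0 ∨ I n = 1 - l := fun n => (qsDig_cases l t (C n)).1
  have hJ : ∀ n, J n = 0 ∨ J n = 1 - l := fun n => (qsDig_cases l t (C n)).2
  have hsumI := (qs_summable l hl0 hl I hI).hasSum
  have hsumJ := (qs_summable l hl0 hl J hJ).hasSum
  refine ⟨∑' n, l ^ n * I n, qs_digits_mem l hl0 hl K hcl h0K hK0 hK1 I hI,
          ∑' n, l ^ n * J n, qs_digits_mem l hl0 hl K hcl h0K hK0 hK1 J hJ, ?_⟩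
  have htel : ∀ N, l ^ N * C N
      = c0 + t * (∑ n ∈ Finset.range N, l ^ n * I n) - (∑ n ∈ Finset.range N, l ^ n * J n) := by
    intro N
    induction N with
    | zero => simp [hCdef, qsC]
    | succ N ih =>
      have h1 : l ^ (N+1) * C (N+1) = l ^ N * C N + l ^ N * (t * I N - J N) := by
        have h2 : C (N+1) = (C N + t * I N - J N) / l := rfl
        rw [h2]
        field_simp
        ring
      rw [h1, ih, Finset.sum_range_succ, Finset.sum_range_succ]
      ring
  have hz : Filter.Tendsto (fun N => l ^ N * C N) atTop (nhds 0) := by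
    apply squeeze_zero_norm (a := fun N : ℕ => l ^ N)
    · intro n
      have hb := hCbound n
      have : |C n| ≤ 1 := abs_le.mpr ⟨by linarith, hb.2⟩
      calc ‖l ^ n * C n‖ = l ^ n * |C n| := by
            rw [norm_mul, Real.norm_eq_abs, Real.norm_eq_abs, abs_pow,
              abs_of_pos hl0]
        _ ≤ l ^ n * 1 := by
            exact mul_le_mul_of_nonneg_left this (pow_nonneg hl0.le n)
        _ = l ^ n := mul_one _
    · exact tendsto_pow_atTop_nhds_zero_of_lt_one hl0.le (by linarith)
  have hrhs : Filter.Tendsto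
      (fun N => c0 + t * (∑ n ∈ Finset.range N, l ^ n * I n)
        - (∑ n ∈ Finset.range N, l ^ n * J n)) atTop
      (nhds (c0 + t * (∑' n, l ^ n * I n) - ∑' n, l ^ n * J n)) :=
    ((tendsto_const_nhds.add (hsumI.tendsto_sum_nat.const_mul t)).sub hsumJ.tendsto_sum_nat)
  have heq := tendsto_nhds_unique (hz.congr htel) hrhs
  linarith [heq]

lemma qs_main (l t : ℝ) (hl1 : 1/3 ≤ l) (hl : l < 1/2)
    (ht1 : 1 - l ≤ t) (ht2 : t ≤ 1)
    (K : Set ℝ) (hcl : IsClosed K) (h0K : (0:ℝ) ∈ K) (hKsub : K ⊆ Icc 0 1)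
    (hK0 : ∀ x ∈ K, l * x ∈ K) (hK1 : ∀ x ∈ K, l * x + (1 - l) ∈ K) :
    ∃ x ∈ K, x ≠ 0 ∧ t * x ∈ K := by
  have hl0 : (0:ℝ) < l := by linarith
  obtain ⟨x', hx', y', hy', hline⟩ :=
    qs_line l t hl1 hl ht1 ht2 K hcl h0K hK0 hK1 ((t-1)*(1-l)/l)
      (by rw [le_div_iff₀ hl0]; nlinarith)
      (by rw [div_le_one hl0]; nlinarith)
  refine ⟨l * x' + (1 - l), hK1 _ hx', ?_, ?_⟩
  · have := (hKsub hx').1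
    nlinarith
  · have : t * (l * x' + (1 - l)) = l * y' + (1 - l) := by
      rw [hline]; field_simp; ring
    rw [this]
    exact hK1 _ hy'

lemma qs_basic (l : ℝ) (hl0 : 0 < l) (hl : l < 1/2)
    (K : Set ℝ) (hKne : K.Nonempty) (hKc : IsCompact K)
    (hK : K = (fun x => l * x) '' K ∪ (fun x => l * x + (1 - l)) '' K) :
    (0:ℝ) ∈ K ∧ (1:ℝ) ∈ K ∧ K ⊆ Icc 0 1 := by
  have hK0 : ∀ x ∈ K, l * x ∈ K := by
    intro x hx; rw [hK]; exact Or.inl ⟨x, hx, rfl⟩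
  have hK1 : ∀ x ∈ K, l * x + (1 - l) ∈ K := by
    intro x hx; rw [hK]; exact Or.inr ⟨x, hx, rfl⟩
  have hbdB := hKc.bddBelow
  have hbdA := hKc.bddAbove
  have haK : sInf K ∈ K := hKc.sInf_mem hKne
  have hbK : sSup K ∈ K := hKc.sSup_mem hKne
  set a := sInf K
  set b := sSup K
  have hale : a ≤ l * a := csInf_le hbdB (hK0 a haK)
  have hbge : l * b + (1 - l) ≤ b := le_csSup hbdA (hK1 b hbK)
  have ha0 : a = 0 := by
    have := haK
    rw [hK] at this
    rcases this with ⟨y, hy, hxy⟩ | ⟨y, hy, hxy⟩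
    · have hya : a ≤ y := csInf_le hbdB hy
      simp only at hxy
      nlinarith
    · simp only at hxy
      have hya : a ≤ y := csInf_le hbdB hy
      nlinarith
  have hb1 : b = 1 := by
    have := hbK
    rw [hK] at this
    rcases this with ⟨y, hy, hxy⟩ | ⟨y, hy, hxy⟩
    · have hya : y ≤ b := le_csSup hbdA hy
      simp only at hxy
      nlinarith
    · simp only at hxy
      have hya : y ≤ b := le_csSup hbdA hy
      nlinarith
  refine ⟨ha0 ▸ haK, hb1 ▸ hbK, fun x hx => ?_⟩
  exact ⟨ha0 ▸ csInf_le hbdB hx, hb1 ▸ le_csSup hbdA hx⟩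

lemma qs_struct (l : ℝ) (hl0 : 0 < l) (hl : l < 1/2)
    (K : Set ℝ) (hKsub : K ⊆ Icc 0 1)
    (hK : K = (fun x => l * x) '' K ∪ (fun x => l * x + (1 - l)) '' K) :
    ∀ x ∈ K, x ≠ 0 → ∃ (n : ℕ) (y : ℝ), y ∈ K ∧ 1 - l ≤ y ∧ x = l ^ n * y := by
  have main : ∀ n : ℕ, ∀ x ∈ K, l ^ n * (1 - l) ≤ x →
      ∃ (m : ℕ) (y : ℝ), y ∈ K ∧ 1 - l ≤ y ∧ x = l ^ m * y := by
    intro n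
    induction n with
    | zero =>
      intro x hx hge
      exact ⟨0, x, hx, by simpa using hge, by simp⟩
    | succ n ih =>
      intro x hx hge
      by_cases hx1 : 1 - l ≤ x
      · exact ⟨0, x, hx, hx1, by simp⟩
      · have hx2 := hx
        rw [hK] at hx2
        rcases hx2 with ⟨y, hy, hxy⟩ | ⟨y, hy, hxy⟩
        · simp only at hxy
          have hy' : l ^ n * (1 - l) ≤ y := by
            rw [← hxy] at hge
            have : l ^ (n+1) * (1-l) = l * (l ^ n * (1-l)) := by ring
            rw [this] at hge
            exact le_of_mul_le_mul_left hge hl0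
          obtain ⟨m, z, hz, hz1, hyz⟩ := ih y hy hy'
          exact ⟨m + 1, z, hz, hz1, by rw [← hxy, hyz]; ring⟩
        · exfalso
          simp only at hxy
          have := (hKsub hy).1
          nlinarith
  intro x hx hxne
  have hxpos : 0 < x := lt_of_le_of_ne (hKsub hx).1 (Ne.symm hxne)
  obtain ⟨n, hn⟩ := exists_pow_lt_of_lt_one hxpos (show l < 1 by linarith)
  refine main n x hx ?_
  nlinarith [pow_pos hl0 n]

/-- The quotient set `K/K` for the attractor of `{λx, λx + (1-λ)}` with
`1/3 ≤ λ < (3-√5)/2` is `⋃_{k ∈ ℤ} [λᵏ(1-λ), λᵏ(1-λ)⁻¹] ∪ {0}`. -/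
theorem quotient_set_of_self_similar_set
    (l : ℝ) (hl0 : 0 < l) (hl : l < 1 / 2)
    (hl1 : 1 / 3 ≤ l) (hl2 : l < (3 - Real.sqrt 5) / 2)
    (K : Set ℝ) (hKne : K.Nonempty) (hKc : IsCompact K)
    (hK : K = (fun x => l * x) '' K ∪ (fun x => l * x + (1 - l)) '' K) :
    (∀ t : ℝ, t ≠ 0 →
      (t ∈ {w : ℝ | ∃ z ∈ K, ∃ x ∈ K, x ≠ 0 ∧ w = z / x} ↔
        ∃ k : ℤ, l ^ k * (1 - l) ≤ t ∧ t ≤ l ^ k * (1 - l)⁻¹)) ∧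
    (0 : ℝ) ∈ {w : ℝ | ∃ z ∈ K, ∃ x ∈ K, x ≠ 0 ∧ w = z / x} := by
  obtain ⟨h0K, h1K, hKsub⟩ := qs_basic l hl0 hl K hKne hKc hK
  have hcl : IsClosed K := hKc.isClosed
  have hlne : l ≠ 0 := ne_of_gt hl0
  have h1l : (0:ℝ) < 1 - l := by linarith
  have hK0 : ∀ x ∈ K, l * x ∈ K := by
    intro x hx; rw [hK]; exact Or.inl ⟨x, hx, rfl⟩
  have hK1 : ∀ x ∈ K, l * x + (1 - l) ∈ K := by
    intro x hx; rw [hK]; exact Or.inr ⟨x, hx, rfl⟩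
  have hKpow : ∀ (n : ℕ), ∀ x ∈ K, l ^ n * x ∈ K := by
    intro n
    induction n with
    | zero => intro x hx; simpa using hx
    | succ n ih =>
      intro x hx
      have h : l ^ (n+1) * x = l * (l ^ n * x) := by ring
      rw [h]
      exact hK0 _ (ih x hx)
  constructor
  · intro t ht
    constructor
    · rintro ⟨z, hz, x, hx, hxne, hteq⟩
      have hzne : z ≠ 0 := by
        intro h; apply ht; rw [hteq, h, zero_div]
      obtain ⟨m, w, hw, hw1, hzw⟩ := qs_struct l hl0 hl K hKsub hK z hz hzne
      obtain ⟨n, y, hy, hy1, hxy⟩ := qs_struct l hl0 hl K hKsub hK x hx hxne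
      have hypos : 0 < y := by linarith
      have hwle : w ≤ 1 := (hKsub hw).2
      have hyle : y ≤ 1 := (hKsub hy).2
      refine ⟨(m:ℤ) - n, ?_, ?_⟩
      all_goals {
        have hzzz : l ^ ((m:ℤ) - n) = l ^ m / l ^ n := by
          rw [zpow_sub₀ hlne, zpow_natCast, zpow_natCast]
        have hteq2 : t = l ^ ((m:ℤ) - n) * (w / y) := by
          rw [hteq, hzw, hxy, hzzz, mul_div_mul_comm]
        have hkpos : 0 < l ^ ((m:ℤ) - n) := zpow_pos hl0 _
        rw [hteq2]
        first
        | · apply mul_le_mul_of_nonneg_left _ hkpos.le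
            rw [le_div_iff₀ hypos]
            nlinarith
        | · apply mul_le_mul_of_nonneg_left _ hkpos.le
            rw [div_le_iff₀ hypos, inv_mul_eq_div, le_div_iff₀ h1l]
            nlinarith }
    · rintro ⟨k, hk1, hk2⟩
      have hkpos : 0 < l ^ k := zpow_pos hl0 k
      set s := t / l ^ k with hs
      have hs1 : 1 - l ≤ s := (le_div_iff₀ hkpos).2 (by nlinarith)
      have hs2 : s ≤ (1 - l)⁻¹ := (div_le_iff₀ hkpos).2 (by nlinarith)
      have hss : ∃ z ∈ K, ∃ x ∈ K, x ≠ 0 ∧ z ≠ 0 ∧ s = z / x := by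
        by_cases hsle : s ≤ 1
        · obtain ⟨x, hx, hxne, htx⟩ :=
            qs_main l s hl1 hl hs1 hsle K hcl h0K hKsub hK0 hK1
          have hspos : 0 < s := by linarith
          refine ⟨s * x, htx, x, hx, hxne, mul_ne_zero (ne_of_gt hspos) hxne, ?_⟩
          field_simp
        · push_neg at hsle
          have hspos : 0 < s := by linarith
          have hmul : (1 - l) * s ≤ 1 := by
            calc (1 - l) * s ≤ (1 - l) * (1 - l)⁻¹ :=
                  mul_le_mul_of_nonneg_left hs2 h1l.le
              _ = 1 := mul_inv_cancel₀ (ne_of_gt h1l)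
          have hinv1 : 1 - l ≤ s⁻¹ := by
            rw [inv_eq_one_div, le_div_iff₀ hspos]; linarith
          have hinvle : s⁻¹ ≤ 1 := by
            rw [inv_eq_one_div, div_le_one hspos]; linarith
          obtain ⟨x, hx, hxne, htx⟩ :=
            qs_main l s⁻¹ hl1 hl hinv1 hinvle K hcl h0K hKsub hK0 hK1
          refine ⟨x, hx, s⁻¹ * x, htx,
            mul_ne_zero (inv_ne_zero (ne_of_gt hspos)) hxne, hxne, ?_⟩
          field_simp
      obtain ⟨z, hz, x, hx, hxne, hzne, hszx⟩ := hss
      have ht' : t = l ^ k * s := by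
        rw [hs]; field_simp
      rcases le_or_gt 0 k with hk | hk
      · lift k to ℕ using hk
        refine ⟨l ^ k * z, hKpow k z hz, x, hx, hxne, ?_⟩
        rw [ht', hszx, zpow_natCast, mul_div_assoc']
      · have hn : (((-k).toNat : ℤ)) = -k := Int.toNat_of_nonneg (by omega)
        refine ⟨z, hz, l ^ (-k).toNat * x, hKpow _ x hx,
          mul_ne_zero (pow_ne_zero _ hlne) hxne, ?_⟩
        have hlk : l ^ k = (l ^ (-k).toNat)⁻¹ := by
          rw [← zpow_natCast, hn, ← zpow_neg, neg_neg]
        rw [ht', hszx, hlk]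
        have hln : (l:ℝ) ^ (-k).toNat ≠ 0 := pow_ne_zero _ hlne
        field_simp
  · exact ⟨0, h0K, 1, h1K, one_ne_zero, by norm_num⟩
end

section
/- Let λ be a real number with 1/3 ≤ λ < (3 − √5)/2, let K be the attractor of the IFS {x ↦ λx, x ↦ λx + (1−λ)}, and let n ≥ 2 be an integer. If x, y, z ∈ K ∩ (0,1) satisfy x^n + y^n = z^n, then, writing α = max(x,y)/min(x,y) − 1 (so α ≥ 0), there exists an integer k such that λ^{kn}(1−λ)^n ≤ 1 + (1+α)^n ≤ λ^{kn}(1−λ)^{−n}. -/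
open Set

lemma Ksub (l : ℝ) (hl0 : 0 < l) (hl : l < 1 / 2)
    (K : Set ℝ) (hKne : K.Nonempty) (hKc : IsCompact K)
    (hK : K = (fun x => l * x) '' K ∪ (fun x => l * x + (1 - l)) '' K) :
    K ⊆ Icc 0 1 := by
  have hbddA : BddAbove K := hKc.bddAbove
  have hbddB : BddBelow K := hKc.bddBelow
  have hMmem : sSup K ∈ K := hKc.sSup_mem hKne
  have hmmem : sInf K ∈ K := hKc.sInf_mem hKne
  have hMle : sSup K ≤ 1 := by
    have hM2 : sSup K ∈ (fun x => l * x) '' K ∪ (fun x => l * x + (1 - l)) '' K := by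
      rw [← hK]; exact hMmem
    rcases hM2 with ⟨v, hv, hveq⟩ | ⟨v, hv, hveq⟩
    all_goals simp only at hveq
    · have hvle : v ≤ sSup K := le_csSup hbddA hv
      nlinarith [le_csSup hbddA hv]
    · have hvle : v ≤ sSup K := le_csSup hbddA hv
      nlinarith
  have hmge : 0 ≤ sInf K := by
    have hm2 : sInf K ∈ (fun x => l * x) '' K ∪ (fun x => l * x + (1 - l)) '' K := by
      rw [← hK]; exact hmmem
    rcases hm2 with ⟨v, hv, hveq⟩ | ⟨v, hv, hveq⟩
    all_goals simp only at hveq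
    · have hvge : sInf K ≤ v := csInf_le hbddB hv
      nlinarith
    · have hvge : sInf K ≤ v := csInf_le hbddB hv
      nlinarith
  intro u hu
  exact ⟨le_trans hmge (csInf_le hbddB hu), le_trans (le_csSup hbddA hu) hMle⟩

lemma decomp (l : ℝ) (hl0 : 0 < l) (hl : l < 1 / 2)
    (K : Set ℝ)
    (hK : K = (fun x => l * x) '' K ∪ (fun x => l * x + (1 - l)) '' K)
    (hsub : K ⊆ Icc 0 1) :
    ∀ N : ℕ, ∀ u ∈ K, l ^ N < u →
      ∃ j : ℕ, ∃ s, s ∈ K ∧ 1 - l ≤ s ∧ s ≤ 1 ∧ u = l ^ j * s := by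
  intro N
  induction N with
  | zero =>
    intro u hu hlt
    simp only [pow_zero] at hlt
    exact absurd (hsub hu).2 (not_le.mpr hlt)
  | succ N ih =>
    intro u hu hlt
    have hu2 := hu
    rw [hK] at hu2
    rcases hu2 with ⟨v, hv, hveq⟩ | ⟨v, hv, hveq⟩
    · simp only at hveq
      have hvK : v ∈ K := hv
      have : l ^ N < v := by
        have : l ^ (N + 1) = l * l ^ N := by ring
        rw [this] at hlt
        rw [← hveq] at hlt
        exact lt_of_mul_lt_mul_left hlt hl0.le
      obtain ⟨j, s, hsK, hs1, hs2, hse⟩ := ih v hvK this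
      exact ⟨j + 1, s, hsK, hs1, hs2, by rw [← hveq, hse]; ring⟩
    · simp only at hveq
      refine ⟨0, u, hu, ?_, (hsub hu).2, by simp⟩
      have := (hsub hv).1
      nlinarith

/-- Necessary condition for solutions of the Fermat equation on the attractor of
`{λx, λx + (1-λ)}` with `1/3 ≤ λ < (3-√5)/2`. -/
theorem fermat_equation_solutions_on_self_similar_set
    (l : ℝ) (hl0 : 0 < l) (hl : l < 1 / 2)
    (hl1 : 1 / 3 ≤ l) (hl2 : l < (3 - Real.sqrt 5) / 2)
    (K : Set ℝ) (hKne : K.Nonempty) (hKc : IsCompact K)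
    (hK : K = (fun x => l * x) '' K ∪ (fun x => l * x + (1 - l)) '' K)
    (n : ℕ) (hn : 2 ≤ n)
    (x y z : ℝ)
    (hx : x ∈ K ∩ Set.Ioo (0 : ℝ) 1) (hy : y ∈ K ∩ Set.Ioo (0 : ℝ) 1)
    (hz : z ∈ K ∩ Set.Ioo (0 : ℝ) 1)
    (hfermat : x ^ n + y ^ n = z ^ n)
    (α : ℝ) (hα : α = max x y / min x y - 1) :
    0 ≤ α ∧
    ∃ k : ℤ, l ^ (k * (n : ℤ)) * (1 - l) ^ (n : ℤ) ≤ 1 + (1 + α) ^ n ∧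
      1 + (1 + α) ^ n ≤ l ^ (k * (n : ℤ)) * (1 - l) ^ (-(n : ℤ)) := by
  have hsub := Ksub l hl0 hl K hKne hKc hK
  obtain ⟨hxK, hx0, hx1⟩ := hx
  obtain ⟨hyK, hy0, hy1⟩ := hy
  obtain ⟨hzK, hz0, hz1⟩ := hz
  set m := min x y with hm
  set M := max x y with hM
  have hm0 : 0 < m := lt_min hx0 hy0
  have hmM : m ≤ M := min_le_max
  have hmK : m ∈ K := by rcases le_total x y with h | h
                         · rw [hm, min_eq_left h]; exact hxK
                         · rw [hm, min_eq_right h]; exact hyK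
  have hl1' : 0 < 1 - l := by linarith
  have hα0 : 0 ≤ α := by
    rw [hα]
    have : (1:ℝ) ≤ M / m := (one_le_div hm0).mpr hmM
    linarith
  have h1α : 1 + α = M / m := by rw [hα]; ring
  have hsum : m ^ n + M ^ n = z ^ n := by
    rw [← hfermat]
    rcases le_total x y with h | h
    · rw [hm, hM, min_eq_left h, max_eq_right h]
    · rw [hm, hM, min_eq_right h, max_eq_left h]; ring
  have hkey : 1 + (1 + α) ^ n = (z / m) ^ n := by
    rw [h1α, div_pow, div_pow, ← hsum]
    field_simp
  -- decompose m and z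
  have hlt1 : l < 1 := by linarith
  obtain ⟨N1, hN1⟩ := exists_pow_lt_of_lt_one hm0 hlt1
  obtain ⟨N2, hN2⟩ := exists_pow_lt_of_lt_one hz0 hlt1
  obtain ⟨j1, s1, hs1K, hs1a, hs1b, hs1e⟩ := decomp l hl0 hl K hK hsub N1 m hmK hN1
  obtain ⟨j2, s2, hs2K, hs2a, hs2b, hs2e⟩ := decomp l hl0 hl K hK hsub N2 z hzK hN2
  have hs10 : 0 < s1 := lt_of_lt_of_le hl1' hs1a
  have hs20 : 0 < s2 := lt_of_lt_of_le hl1' hs2a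
  refine ⟨hα0, (j2 : ℤ) - j1, ?_, ?_⟩
  · -- lower bound
    have hratio : l ^ ((j2:ℤ) - j1) * (1 - l) ≤ z / m := by
      have : z / m = l ^ ((j2:ℤ) - j1) * (s2 / s1) := by
        rw [hs1e, hs2e, zpow_sub₀ (ne_of_gt hl0), zpow_natCast, zpow_natCast]
        field_simp
      rw [this]
      have h1 : (1 - l) ≤ s2 / s1 := by
        rw [le_div_iff₀ hs10]
        nlinarith
      have h2 : (0:ℝ) ≤ l ^ ((j2:ℤ) - j1) := (zpow_pos hl0 _).le
      exact mul_le_mul_of_nonneg_left h1 h2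
    rw [hkey]
    calc l ^ (((j2:ℤ) - j1) * n) * (1 - l) ^ (n:ℤ)
        = (l ^ ((j2:ℤ) - j1) * (1 - l)) ^ n := by
          rw [zpow_mul, zpow_natCast, zpow_natCast, mul_pow]
      _ ≤ (z / m) ^ n := by
          apply pow_le_pow_left₀ _ hratio
          positivity
  · -- upper bound
    have hratio : z / m ≤ l ^ ((j2:ℤ) - j1) * (1 - l)⁻¹ := by
      have heq : z / m = l ^ ((j2:ℤ) - j1) * (s2 / s1) := by
        rw [hs1e, hs2e, zpow_sub₀ (ne_of_gt hl0), zpow_natCast, zpow_natCast]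
        field_simp
      rw [heq]
      have h1 : s2 / s1 ≤ (1 - l)⁻¹ := by
        rw [div_le_iff₀ hs10, inv_mul_eq_div, le_div_iff₀ hl1']
        nlinarith
      have h2 : (0:ℝ) ≤ l ^ ((j2:ℤ) - j1) := (zpow_pos hl0 _).le
      exact mul_le_mul_of_nonneg_left h1 h2
    rw [hkey]
    calc (z / m) ^ n
        ≤ (l ^ ((j2:ℤ) - j1) * (1 - l)⁻¹) ^ n := by
          apply pow_le_pow_left₀ _ hratio
          positivity
      _ = l ^ (((j2:ℤ) - j1) * n) * (1 - l) ^ (-(n:ℤ)) := by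
          rw [zpow_mul, zpow_natCast, mul_pow, zpow_neg, zpow_natCast, inv_pow]
end

section
/- Let λ be a real number with 1/3 ≤ λ < (3 − √5)/2, let K be the attractor of the IFS {x ↦ λx, x ↦ λx + (1−λ)}, and let n ≥ 2 be an integer. Then the Fermat equation has infinitely many solutions on K: the set {(x, y, z) ∈ ℝ³ : x, y, z ∈ K ∩ (0,1) and x^n + y^n = z^n} is infinite. -/
open Set

/-- One refinement step of the two interleaved digit expansions. -/
noncomputable def fermatStepCS (l ρ : ℝ) (j : ℕ) (p : ℝ × ℝ) : ℝ × ℝ :=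
  ((if ρ * p.2 - p.1 ≤ l ^ (j + 1) then p.1 else p.1 + (1 - l) * l ^ j),
   (if ρ * p.2 - (if ρ * p.2 - p.1 ≤ l ^ (j + 1) then p.1 else p.1 + (1 - l) * l ^ j)
        < -(ρ * l ^ (j + 1)) then p.2 + (1 - l) * l ^ j else p.2))

/-- The interleaved digit expansions: at stage `i` both points are left endpoints of
level-`(i+1)` basic intervals. -/
noncomputable def fermatSeqCS (l ρ : ℝ) : ℕ → ℝ × ℝ
  | 0 => (1 - l, 1 - l)
  | (i + 1) => fermatStepCS l ρ (i + 1) (fermatSeqCS l ρ i)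

lemma fermatSeqCS_digits (l ρ : ℝ) (i : ℕ) :
    ((fermatSeqCS l ρ (i+1)).1 = (fermatSeqCS l ρ i).1 ∨
      (fermatSeqCS l ρ (i+1)).1 = (fermatSeqCS l ρ i).1 + (1 - l) * l ^ (i+1)) ∧
    ((fermatSeqCS l ρ (i+1)).2 = (fermatSeqCS l ρ i).2 ∨
      (fermatSeqCS l ρ (i+1)).2 = (fermatSeqCS l ρ i).2 + (1 - l) * l ^ (i+1)) := by
  have hs : fermatSeqCS l ρ (i+1) = fermatStepCS l ρ (i+1) (fermatSeqCS l ρ i) := rfl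
  rw [hs, fermatStepCS]
  split_ifs <;> simp

lemma fermatSeqCS_inv (l ρ : ℝ) (hl0 : 0 < l) (hl : l < 1 / 2) (hl1 : 1 / 3 ≤ l)
    (hρ0 : 0 < ρ) (hρ1 : ρ < 1) (hρl : 1 - l ≤ ρ) (i : ℕ) :
    -(ρ * l ^ (i + 1)) ≤ ρ * (fermatSeqCS l ρ i).2 - (fermatSeqCS l ρ i).1 ∧
      ρ * (fermatSeqCS l ρ i).2 - (fermatSeqCS l ρ i).1 ≤ l ^ (i + 1) := by
  induction i with
  | zero =>
    constructor
    · show -(ρ * l ^ (0+1)) ≤ ρ * (1 - l) - (1 - l)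
      have h : l ^ (0+1) = l := pow_one l
      rw [h]
      nlinarith
    · show ρ * (1 - l) - (1 - l) ≤ l ^ (0+1)
      have h : l ^ (0+1) = l := pow_one l
      rw [h]
      nlinarith
  | succ i ih =>
    obtain ⟨hlow, hhigh⟩ := ih
    set u := (fermatSeqCS l ρ i).1 with hu
    set v := (fermatSeqCS l ρ i).2 with hv
    set ℓ : ℝ := l ^ (i + 1) with hℓ
    have hℓ0 : (0:ℝ) < ℓ := pow_pos hl0 _
    have hpow : l ^ (i + 1 + 1) = l * ℓ := by rw [hℓ, ← pow_succ']
    have hkey : ρ * ((1 - 2*l) * ℓ) ≤ l * ℓ := by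
      nlinarith [mul_nonneg (mul_nonneg (by linarith : (0:ℝ) ≤ 1 - ρ)
        (by linarith : (0:ℝ) ≤ 1 - 2*l)) hℓ0.le]
    have hseq : fermatSeqCS l ρ (i+1) = fermatStepCS l ρ (i+1) (fermatSeqCS l ρ i) := rfl
    rw [hseq]
    rw [fermatStepCS]
    simp only [← hu, ← hv, ← hℓ, hpow]
    by_cases h1 : ρ * v - u ≤ l * ℓ
    · rw [if_pos h1]
      by_cases h2 : ρ * v - u < -(ρ * (l * ℓ))
      · rw [if_pos h2]
        constructor
        · nlinarith
        · nlinarith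
      · rw [if_neg h2]
        push_neg at h2
        exact ⟨h2, h1⟩
    · rw [if_neg h1]
      push_neg at h1
      by_cases h2 : ρ * v - (u + (1 - l) * ℓ) < -(ρ * (l * ℓ))
      · rw [if_pos h2]
        constructor
        · nlinarith [mul_nonneg (by linarith : (0:ℝ) ≤ 2*l - 1 + ρ) hℓ0.le]
        · nlinarith
      · rw [if_neg h2]
        push_neg at h2
        constructor
        · exact h2
        · nlinarith [mul_nonneg (by linarith : (0:ℝ) ≤ 1 - l) hℓ0.le]

set_option maxHeartbeats 2000000 in
/-- The Fermat equation has infinitely many solutions on the attractor of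
`{λx, λx + (1-λ)}` with `1/3 ≤ λ < (3-√5)/2`. -/
theorem fermat_equation_infinitely_many_solutions_on_self_similar_set
    (l : ℝ) (hl0 : 0 < l) (hl : l < 1 / 2)
    (hl1 : 1 / 3 ≤ l) (hl2 : l < (3 - Real.sqrt 5) / 2)
    (K : Set ℝ) (hKne : K.Nonempty) (hKc : IsCompact K)
    (hK : K = (fun x => l * x) '' K ∪ (fun x => l * x + (1 - l)) '' K)
    (n : ℕ) (hn : 2 ≤ n) :
    {p : ℝ × ℝ × ℝ | p.1 ∈ K ∩ Set.Ioo (0 : ℝ) 1 ∧ p.2.1 ∈ K ∩ Set.Ioo (0 : ℝ) 1 ∧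
      p.2.2 ∈ K ∩ Set.Ioo (0 : ℝ) 1 ∧ p.1 ^ n + p.2.1 ^ n = p.2.2 ^ n}.Infinite := by
  -- basic maps
  have hA : ∀ x ∈ K, l * x ∈ K := by
    intro x hx
    rw [hK]
    exact Or.inl ⟨x, hx, rfl⟩
  have hB : ∀ x ∈ K, l * x + (1 - l) ∈ K := by
    intro x hx
    rw [hK]
    exact Or.inr ⟨x, hx, rfl⟩
  -- K ⊆ [0,1]
  have hbddA : BddAbove K := hKc.bddAbove
  have hbddB : BddBelow K := hKc.bddBelow
  have hsup_le : sSup K ≤ 1 := by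
    have h1 : sSup K ≤ l * sSup K + (1 - l) := by
      apply csSup_le hKne
      intro x hx
      rw [hK] at hx
      rcases hx with ⟨y, hy, rfl⟩ | ⟨y, hy, rfl⟩
      · have := le_csSup hbddA hy
        simp only
        nlinarith
      · have := le_csSup hbddA hy
        simp only
        nlinarith
    nlinarith
  have hinf_ge : 0 ≤ sInf K := by
    have h1 : l * sInf K ≤ sInf K := by
      apply le_csInf hKne
      intro x hx
      rw [hK] at hx
      rcases hx with ⟨y, hy, rfl⟩ | ⟨y, hy, rfl⟩
      · have := csInf_le hbddB hy
        simp only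
        nlinarith
      · have := csInf_le hbddB hy
        simp only
        nlinarith
    nlinarith
  have hK01 : ∀ x ∈ K, 0 ≤ x ∧ x ≤ 1 := by
    intro x hx
    exact ⟨le_trans hinf_ge (csInf_le hbddB hx), le_trans (le_csSup hbddA hx) hsup_le⟩
  have h0K : (0 : ℝ) ∈ K := by
    have hm : sInf K ∈ K := hKc.sInf_mem hKne
    have h1 : sInf K ≤ l * sInf K := csInf_le hbddB (hA _ hm)
    have h2 : sInf K = 0 := by nlinarith
    rwa [h2] at hm
  -- ρ = 2^(-1/n)
  set ρ : ℝ := (2 : ℝ) ^ (-(1 / (n : ℝ))) with hρdef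
  have hn0 : (0 : ℝ) < (n : ℝ) := by
    have : (0 : ℕ) < n := lt_of_lt_of_le (by norm_num) hn
    exact_mod_cast this
  have hρpos : 0 < ρ := Real.rpow_pos_of_pos (by norm_num) _
  have hρlt1 : ρ < 1 := by
    apply Real.rpow_lt_one_of_one_lt_of_neg (by norm_num)
    have : 0 < 1 / (n : ℝ) := by positivity
    linarith
  have hρn : ρ ^ n = 1 / 2 := by
    rw [hρdef, ← Real.rpow_natCast ((2:ℝ) ^ (-(1 / (n : ℝ)))) n, ← Real.rpow_mul (by norm_num)]
    have hne : (n : ℝ) ≠ 0 := ne_of_gt hn0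
    have h : (-(1 / (n : ℝ))) * (n : ℝ) = -1 := by
      field_simp
    rw [h]
    norm_num [Real.rpow_neg_one]
  have hsqrt2 : Real.sqrt 2 ≤ 3 / 2 := by
    nlinarith [Real.sq_sqrt (by norm_num : (0:ℝ) ≤ 2), Real.sqrt_nonneg 2]
  have hsqrt2pos : 0 < Real.sqrt 2 := Real.sqrt_pos.mpr (by norm_num)
  have hρ_ge : (2 : ℝ) / 3 ≤ ρ := by
    have h1 : ((2 : ℝ) ^ (-(1/2 : ℝ))) ≤ ρ := by
      apply Real.rpow_le_rpow_of_exponent_le (by norm_num)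
      have h2 : (1 / (n : ℝ)) ≤ 1 / 2 := by
        apply one_div_le_one_div_of_le (by norm_num)
        exact_mod_cast hn
      linarith
    have h3 : (2 : ℝ) ^ (-(1/2 : ℝ)) = (Real.sqrt 2)⁻¹ := by
      rw [Real.rpow_neg (by norm_num : (0:ℝ) ≤ 2), Real.sqrt_eq_rpow]
    rw [h3] at h1
    have h4 : (2 : ℝ) / 3 ≤ (Real.sqrt 2)⁻¹ := by
      rw [le_inv_comm₀ (by norm_num) hsqrt2pos]
      linarith
    linarith
  have hρl : 1 - l ≤ ρ := by linarith
  clear_value ρ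
  -- the sequences
  set S : ℕ → ℝ × ℝ := fermatSeqCS l ρ with hSdef
  have hinv := fun i => fermatSeqCS_inv l ρ hl0 hl hl1 hρpos hρlt1 hρl i
  have hdig := fun i => fermatSeqCS_digits l ρ i
  clear_value S
  -- membership in K via extension property
  have hPstep0 : ∀ (j : ℕ) (u : ℝ), (∀ y ∈ K, u + l ^ j * y ∈ K) →
      ∀ y ∈ K, u + l ^ (j+1) * y ∈ K := by
    intro j u hu y hy
    have h1 : u + l ^ (j+1) * y = u + l ^ j * (l * y) := by ring
    rw [h1]
    exact hu _ (hA y hy)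
  have hPstep1 : ∀ (j : ℕ) (u : ℝ), (∀ y ∈ K, u + l ^ j * y ∈ K) →
      ∀ y ∈ K, (u + (1 - l) * l ^ j) + l ^ (j+1) * y ∈ K := by
    intro j u hu y hy
    have h1 : (u + (1 - l) * l ^ j) + l ^ (j+1) * y = u + l ^ j * (l * y + (1 - l)) := by ring
    rw [h1]
    exact hu _ (hB y hy)
  have hPS : ∀ i, (∀ y ∈ K, (S i).1 + l ^ (i+1) * y ∈ K) ∧
      (∀ y ∈ K, (S i).2 + l ^ (i+1) * y ∈ K) := by
    intro i
    induction i with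
    | zero =>
      constructor <;>
      · intro y hy
        have h1 : (S 0).1 = 1 - l := by rw [hSdef]; simp [fermatSeqCS]
        have h2 : (S 0).2 = 1 - l := by rw [hSdef]; simp [fermatSeqCS]
        first
        | (rw [h1]; have : (1 - l) + l ^ (0+1) * y = l * y + (1 - l) := by ring
           rw [this]; exact hB y hy)
        | (rw [h2]; have : (1 - l) + l ^ (0+1) * y = l * y + (1 - l) := by ring
           rw [this]; exact hB y hy)
    | succ i ih =>
      obtain ⟨ihu, ihv⟩ := ih
      obtain ⟨hd1, hd2⟩ := hdig i
      constructor
      · rcases hd1 with h | h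
        · rw [hSdef] at *
          rw [h]
          exact hPstep0 _ _ ihu
        · rw [hSdef] at *
          rw [h]
          exact hPstep1 _ _ ihu
      · rcases hd2 with h | h
        · rw [hSdef] at *
          rw [h]
          exact hPstep0 _ _ ihv
        · rw [hSdef] at *
          rw [h]
          exact hPstep1 _ _ ihv
  have huK : ∀ i, (S i).1 ∈ K := by
    intro i
    have := (hPS i).1 0 h0K
    simpa using this
  have hvK : ∀ i, (S i).2 ∈ K := by
    intro i
    have := (hPS i).2 0 h0K
    simpa using this
  -- monotone
  have hmono_u : Monotone (fun i => (S i).1) := by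
    apply monotone_nat_of_le_succ
    intro i
    rcases (hdig i).1 with h | h <;> rw [hSdef] <;> rw [h]
    nlinarith [pow_pos hl0 (i+1)]
  have hmono_v : Monotone (fun i => (S i).2) := by
    apply monotone_nat_of_le_succ
    intro i
    rcases (hdig i).2 with h | h <;> rw [hSdef] <;> rw [h]
    nlinarith [pow_pos hl0 (i+1)]
  have hbdd_u : BddAbove (Set.range fun i => (S i).1) := by
    refine ⟨1, ?_⟩
    rintro w ⟨i, rfl⟩
    exact (hK01 _ (huK i)).2
  have hbdd_v : BddAbove (Set.range fun i => (S i).2) := by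
    refine ⟨1, ?_⟩
    rintro w ⟨i, rfl⟩
    exact (hK01 _ (hvK i)).2
  -- limits
  set x : ℝ := ⨆ i, (S i).1 with hxdef
  set z : ℝ := ⨆ i, (S i).2 with hzdef
  have hux : Filter.Tendsto (fun i => (S i).1) Filter.atTop (nhds x) :=
    tendsto_atTop_ciSup hmono_u hbdd_u
  have hvz : Filter.Tendsto (fun i => (S i).2) Filter.atTop (nhds z) :=
    tendsto_atTop_ciSup hmono_v hbdd_v
  have hxK : x ∈ K := hKc.isClosed.mem_of_tendsto hux (Filter.Eventually.of_forall huK)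
  have hzK : z ∈ K := hKc.isClosed.mem_of_tendsto hvz (Filter.Eventually.of_forall hvK)
  have hxz : ρ * z - x = 0 := by
    have hD : Filter.Tendsto (fun i => ρ * (S i).2 - (S i).1) Filter.atTop
        (nhds (ρ * z - x)) := (hvz.const_mul ρ).sub hux
    have hpowlim : Filter.Tendsto (fun i : ℕ => l ^ (i + 1)) Filter.atTop (nhds 0) := by
      have h := tendsto_pow_atTop_nhds_zero_of_lt_one (le_of_lt hl0) (by linarith : l < 1)
      have h2 := h.const_mul l
      simp only [mul_zero] at h2
      apply h2.congr
      intro i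
      rw [← pow_succ']
    have hD0 : Filter.Tendsto (fun i => ρ * (S i).2 - (S i).1) Filter.atTop (nhds 0) := by
      apply tendsto_of_tendsto_of_tendsto_of_le_of_le (g := fun i : ℕ => -(l ^ (i+1)))
        (h := fun i : ℕ => l ^ (i + 1)) (by simpa using hpowlim.neg) hpowlim
      · intro i
        have h2 : ρ * l ^ (i+1) ≤ l ^ (i+1) := by
          nlinarith [pow_pos hl0 (i+1)]
        simp only [hSdef]
        linarith [(hinv i).1]
      · intro i
        simp only [hSdef]
        linarith [(hinv i).2]
    exact tendsto_nhds_unique hD hD0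
  have hx_ge : 1 - l ≤ x := by
    have h : (S 0).1 ≤ x := le_ciSup hbdd_u 0
    have h0 : (S 0).1 = 1 - l := by rw [hSdef]; simp [fermatSeqCS]
    rw [h0] at h
    exact h
  clear_value x z
  have hxpos : 0 < x := by linarith
  have hzpos : 0 < z := by nlinarith
  have hzle1 : z ≤ 1 := (hK01 z hzK).2
  have hxle1 : x ≤ 1 := (hK01 x hxK).2
  -- key equation
  have hxzn : x ^ n + x ^ n = z ^ n := by
    have h1 : x = ρ * z := by linarith
    rw [h1, mul_pow, hρn]
    ring
  -- scaling
  have hscale : ∀ k : ℕ, ∀ w ∈ K, l ^ k * w ∈ K := by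
    intro k
    induction k with
    | zero => intro w hw; simpa using hw
    | succ k ih =>
      intro w hw
      have h : l ^ (k+1) * w = l * (l ^ k * w) := by ring
      rw [h]
      exact hA _ (ih w hw)
  -- the family of solutions
  refine Set.infinite_of_injective_forall_mem
    (f := fun k : ℕ => (l ^ (k+1) * x, l ^ (k+1) * x, l ^ (k+1) * z)) ?_ ?_
  · intro k1 k2 hf
    have h3 : l ^ (k1+1) * z = l ^ (k2+1) * z := congrArg (fun p => p.2.2) hf
    by_contra hne
    rcases Nat.lt_or_ge k1 k2 with hlt | hge
    · have hp : l ^ (k2+1) < l ^ (k1+1) :=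
        pow_lt_pow_right_of_lt_one₀ hl0 (by linarith) (by omega)
      nlinarith
    · have hlt2 : k2 < k1 := by omega
      have hp : l ^ (k1+1) < l ^ (k2+1) :=
        pow_lt_pow_right_of_lt_one₀ hl0 (by linarith) (by omega)
      nlinarith
  · intro k
    have hlk : 0 < l ^ (k+1) := pow_pos hl0 _
    have hlk1 : l ^ (k+1) ≤ l := by
      calc l ^ (k+1) ≤ l ^ 1 := pow_le_pow_of_le_one (le_of_lt hl0) (by linarith) (by omega)
      _ = l := pow_one l
    have hmemx : l ^ (k+1) * x ∈ K ∩ Set.Ioo (0:ℝ) 1 := by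
      refine ⟨hscale _ _ hxK, by positivity, ?_⟩
      have h := mul_le_mul hlk1 hxle1 (le_of_lt hxpos) (le_of_lt hl0)
      nlinarith
    have hmemz : l ^ (k+1) * z ∈ K ∩ Set.Ioo (0:ℝ) 1 := by
      refine ⟨hscale _ _ hzK, by positivity, ?_⟩
      have h := mul_le_mul hlk1 hzle1 (le_of_lt hzpos) (le_of_lt hl0)
      nlinarith
    refine ⟨hmemx, hmemx, hmemz, ?_⟩
    simp only
    rw [mul_pow, mul_pow, ← mul_add, hxzn]
end

section
/- Let λ be a real number with 1/3 ≤ λ < (3 − √5)/2 and let K be the attractor of the IFS {x ↦ λx, x ↦ λx + (1−λ)}. For a real a, write a·K = {a·x : x ∈ K, x ≠ 0}. Then e·K ∩ π·K ≠ ∅, e·K ∩ 1·K ≠ ∅, π·K ∩ 1·K ≠ ∅, and √2·K ∩ 1·K ≠ ∅, where e is Euler's number and π is the circle constant. -/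
open Set Filter Finset Topology

/-- Greedy digit choice keeping the discrepancy in an invariant interval. -/
noncomputable def nextd (l t D : ℝ) : ℝ × ℝ :=
  if l < D * (1 - l) then (0, 1)
  else if D * (1 - l) < -(l * t) then
    (if (D + t) * (1 - l) ≤ l then (1, 0) else (1, 1))
  else (0, 0)

lemma nextd_spec (l t D : ℝ) (hl0 : 0 < l) (hl : l < 1 / 2) (ht0 : 0 < t)
    (hA : 1 - 2 * l ≤ l * t) (hB : t * (1 - 2 * l) ≤ 1)
    (h1 : -t ≤ D * (1 - l)) (h2 : D * (1 - l) ≤ 1) :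
    ((nextd l t D).1 = 0 ∨ (nextd l t D).1 = 1) ∧
    ((nextd l t D).2 = 0 ∨ (nextd l t D).2 = 1) ∧
    -(l * t) ≤ (D + t * (nextd l t D).1 - (nextd l t D).2) * (1 - l) ∧
    (D + t * (nextd l t D).1 - (nextd l t D).2) * (1 - l) ≤ l := by
  unfold nextd
  split_ifs with hc1 hc2 hc3 <;>
    refine ⟨by norm_num, by norm_num, ?_, ?_⟩ <;>
    (try push_neg at *) <;> simp only [Prod.fst, Prod.snd] <;> norm_num <;> nlinarith

/-- The discrepancy sequence. -/
noncomputable def Dseq (l t D : ℝ) : ℕ → ℝ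
  | 0 => D
  | n + 1 =>
      (Dseq l t D n + t * (nextd l t (Dseq l t D n)).1 - (nextd l t (Dseq l t D n)).2) / l

lemma digit_summable (l : ℝ) (hl0 : 0 < l) (hl : l < 1 / 2) (a : ℕ → ℝ)
    (ha : ∀ n, a n = 0 ∨ a n = 1) : Summable (fun n => a n * l ^ n) := by
  refine Summable.of_nonneg_of_le (fun n => ?_) (fun n => ?_)
    (summable_geometric_of_lt_one hl0.le (by linarith))
  · rcases ha n with h | h <;> rw [h]
    · simp
    · simp; positivity
  · rcases ha n with h | h <;> rw [h]
    · simp; positivity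
    · simp

lemma key (l t D : ℝ) (hl0 : 0 < l) (hl : l < 1 / 2) (ht0 : 0 < t)
    (hA : 1 - 2 * l ≤ l * t) (hB : t * (1 - 2 * l) ≤ 1)
    (hD1 : -t ≤ D * (1 - l)) (hD2 : D * (1 - l) ≤ 1) :
    ∃ a b : ℕ → ℝ, (∀ n, a n = 0 ∨ a n = 1) ∧ (∀ n, b n = 0 ∨ b n = 1) ∧
      (∑' n, b n * l ^ n) = D + t * ∑' n, a n * l ^ n := by
  have h1l : 0 < 1 - l := by linarith
  set a : ℕ → ℝ := fun n => (nextd l t (Dseq l t D n)).1 with ha_def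
  set b : ℕ → ℝ := fun n => (nextd l t (Dseq l t D n)).2 with hb_def
  have hinv : ∀ n, -t ≤ Dseq l t D n * (1 - l) ∧ Dseq l t D n * (1 - l) ≤ 1 := by
    intro n
    induction n with
    | zero => exact ⟨hD1, hD2⟩
    | succ n ih =>
      obtain ⟨-, -, hs1, hs2⟩ := nextd_spec l t (Dseq l t D n) hl0 hl ht0 hA hB ih.1 ih.2
      have hrw : Dseq l t D (n + 1) * (1 - l)
          = (Dseq l t D n + t * (nextd l t (Dseq l t D n)).1
              - (nextd l t (Dseq l t D n)).2) * (1 - l) / l := by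
        rw [Dseq]; ring
      rw [hrw]
      constructor
      · rw [le_div_iff₀ hl0]; nlinarith
      · rw [div_le_one hl0]; nlinarith
  have ha : ∀ n, a n = 0 ∨ a n = 1 := fun n =>
    (nextd_spec l t (Dseq l t D n) hl0 hl ht0 hA hB (hinv n).1 (hinv n).2).1
  have hb : ∀ n, b n = 0 ∨ b n = 1 := fun n =>
    (nextd_spec l t (Dseq l t D n) hl0 hl ht0 hA hB (hinv n).1 (hinv n).2).2.1
  have hstep : ∀ n, Dseq l t D (n + 1) * l = Dseq l t D n + t * a n - b n := by
    intro n
    rw [Dseq, div_mul_cancel₀ _ (ne_of_gt hl0)]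
  have hId : ∀ n, (∑ i ∈ Finset.range n, b i * l ^ i)
      = D + t * (∑ i ∈ Finset.range n, a i * l ^ i) - l ^ n * Dseq l t D n := by
    intro n
    induction n with
    | zero => simp [Dseq]
    | succ n ih =>
      rw [Finset.sum_range_succ, Finset.sum_range_succ, ih, pow_succ]
      linear_combination (l : ℝ) ^ n * hstep n
  refine ⟨a, b, ha, hb, ?_⟩
  have hbs : Summable (fun n => b n * l ^ n) := digit_summable l hl0 hl b hb
  have has : Summable (fun n => a n * l ^ n) := digit_summable l hl0 hl a ha
  have h0 : Tendsto (fun n => l ^ n * Dseq l t D n) atTop (𝓝 0) := by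
    have hg : Tendsto (fun n : ℕ => ((t + 1) / (1 - l)) * l ^ n) atTop (𝓝 0) := by
      have := (tendsto_pow_atTop_nhds_zero_of_lt_one hl0.le
        (by linarith : l < 1)).const_mul ((t + 1) / (1 - l))
      simpa using this
    apply squeeze_zero_norm _ hg
    intro n
    . 
      have hbd : |Dseq l t D n| ≤ (t + 1) / (1 - l) := by
        rw [abs_le]
        constructor
        · rw [show -((t + 1) / (1 - l)) = (-(t + 1)) / (1 - l) by ring, div_le_iff₀ h1l]
          linarith [(hinv n).1]
        · rw [le_div_iff₀ h1l]
          linarith [(hinv n).2]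
      rw [Real.norm_eq_abs, abs_mul, abs_pow, abs_of_pos hl0, mul_comm]
      apply mul_le_mul_of_nonneg_right hbd (by positivity)
  have h1 : Tendsto (fun n => ∑ i ∈ Finset.range n, b i * l ^ i) atTop
      (𝓝 (∑' n, b n * l ^ n)) := hbs.hasSum.tendsto_sum_nat
  have h2 : Tendsto (fun n => D + t * (∑ i ∈ Finset.range n, a i * l ^ i)
      - l ^ n * Dseq l t D n) atTop (𝓝 (D + t * (∑' n, a n * l ^ n) - 0)) :=
    (tendsto_const_nhds.add (has.hasSum.tendsto_sum_nat.const_mul t)).sub h0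
  have h3 : Tendsto (fun n => ∑ i ∈ Finset.range n, b i * l ^ i) atTop
      (𝓝 (D + t * (∑' n, a n * l ^ n) - 0)) := h2.congr (fun n => (hId n).symm)
  have := tendsto_nhds_unique h1 h3
  rw [this, sub_zero]

lemma mapK0 (l : ℝ) (K : Set ℝ)
    (hK : K = (fun x => l * x) '' K ∪ (fun x => l * x + (1 - l)) '' K)
    {x : ℝ} (hx : x ∈ K) : l * x ∈ K := by
  rw [hK]; exact Set.mem_union_left _ ⟨x, hx, rfl⟩

lemma mapK1 (l : ℝ) (K : Set ℝ)
    (hK : K = (fun x => l * x) '' K ∪ (fun x => l * x + (1 - l)) '' K)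
    {x : ℝ} (hx : x ∈ K) : l * x + (1 - l) ∈ K := by
  rw [hK]; exact Set.mem_union_right _ ⟨x, hx, rfl⟩

lemma digit_mem (l : ℝ) (hl0 : 0 < l) (hl : l < 1 / 2)
    (K : Set ℝ) (hKne : K.Nonempty) (hKc : IsCompact K)
    (hK : K = (fun x => l * x) '' K ∪ (fun x => l * x + (1 - l)) '' K)
    (a : ℕ → ℝ) (ha : ∀ n, a n = 0 ∨ a n = 1) :
    (1 - l) * ∑' n, a n * l ^ n ∈ K := by
  obtain ⟨y₀, hy₀⟩ := hKne
  have main : ∀ (N : ℕ) (c : ℕ → ℝ), (∀ n, c n = 0 ∨ c n = 1) →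
      l ^ N * y₀ + (1 - l) * (∑ i ∈ Finset.range N, c i * l ^ i) ∈ K := by
    intro N
    induction N with
    | zero => intro c _; simpa using hy₀
    | succ N ih =>
      intro c hc
      have hz := ih (fun n => c (n + 1)) (fun n => hc (n + 1))
      have hrw : l ^ (N + 1) * y₀ + (1 - l) * (∑ i ∈ Finset.range (N + 1), c i * l ^ i)
          = l * (l ^ N * y₀ + (1 - l) * (∑ i ∈ Finset.range N, c (i + 1) * l ^ i))
            + c 0 * (1 - l) := by
        rw [Finset.sum_range_succ']
        have : ∀ i ∈ Finset.range N, c (i + 1) * l ^ (i + 1) = l * (c (i + 1) * l ^ i) := by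
          intro i _; rw [pow_succ]; ring
        rw [Finset.sum_congr rfl this, ← Finset.mul_sum]
        ring
      rw [hrw]
      rcases hc 0 with h | h
      · rw [h]; simpa using mapK0 l K hK hz
      · rw [h, one_mul]; exact mapK1 l K hK hz
  have hsum : Summable (fun n => a n * l ^ n) := digit_summable l hl0 hl a ha
  have htend : Tendsto (fun N => l ^ N * y₀ + (1 - l) * (∑ i ∈ Finset.range N, a i * l ^ i))
      atTop (𝓝 ((1 - l) * ∑' n, a n * l ^ n)) := by
    have t1 : Tendsto (fun N : ℕ => l ^ N * y₀) atTop (𝓝 0) := by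
      have := (tendsto_pow_atTop_nhds_zero_of_lt_one hl0.le (by linarith : l < 1)).mul_const y₀
      simpa using this
    have t2 := hsum.hasSum.tendsto_sum_nat.const_mul (1 - l)
    have := t1.add t2
    simpa using this
  exact hKc.isClosed.mem_of_tendsto htend
    (Filter.Eventually.of_forall (fun N => main N a ha))

lemma tsum_digit_nonneg (l : ℝ) (hl0 : 0 < l) (a : ℕ → ℝ)
    (ha : ∀ n, a n = 0 ∨ a n = 1) : 0 ≤ ∑' n, a n * l ^ n := by
  apply tsum_nonneg
  intro n
  rcases ha n with h | h <;> rw [h]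
  · simp
  · simp; positivity

lemma ratio_mem (l t : ℝ) (hl0 : 0 < l) (hl : l < 1 / 2) (ht0 : 0 < t)
    (hA : 1 - 2 * l ≤ l * t) (hB : t * (1 - 2 * l) ≤ 1)
    (hstart : (1 - l ≤ t ∧ t * (1 - l) ≤ 1) ∨ 1 - l ≤ l * t)
    (K : Set ℝ) (hKne : K.Nonempty) (hKc : IsCompact K)
    (hK : K = (fun x => l * x) '' K ∪ (fun x => l * x + (1 - l)) '' K) :
    ∃ x ∈ K, ∃ y ∈ K, 0 < x ∧ 0 < y ∧ y = t * x := by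
  have h1l : 0 < 1 - l := by linarith
  rcases hstart with ⟨hs1, hs2⟩ | hs
  · -- start with a₀ = b₀ = 1, D = (t-1)/l
    have hD1 : -t ≤ ((t - 1) / l) * (1 - l) := by
      rw [div_mul_eq_mul_div, le_div_iff₀ hl0]; nlinarith
    have hD2 : ((t - 1) / l) * (1 - l) ≤ 1 := by
      rw [div_mul_eq_mul_div, div_le_one hl0]; nlinarith
    obtain ⟨a, b, ha, hb, heq⟩ := key l t ((t - 1) / l) hl0 hl ht0 hA hB hD1 hD2
    set Sa := ∑' n, a n * l ^ n with hSa
    set Sb := ∑' n, b n * l ^ n with hSb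
    have hSa0 : 0 ≤ Sa := tsum_digit_nonneg l hl0 a ha
    have hSb0 : 0 ≤ Sb := tsum_digit_nonneg l hl0 b hb
    have hza : (1 - l) * Sa ∈ K := digit_mem l hl0 hl K hKne hKc hK a ha
    have hzb : (1 - l) * Sb ∈ K := digit_mem l hl0 hl K hKne hKc hK b hb
    have h' : l * Sb = t - 1 + t * (l * Sa) := by
      rw [heq]; field_simp
    refine ⟨l * ((1 - l) * Sa) + (1 - l), mapK1 l K hK hza,
            l * ((1 - l) * Sb) + (1 - l), mapK1 l K hK hzb, ?_, ?_, ?_⟩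
    · nlinarith [mul_nonneg (mul_nonneg hl0.le h1l.le) hSa0]
    · nlinarith [mul_nonneg (mul_nonneg hl0.le h1l.le) hSb0]
    · linear_combination (1 - l) * h'
  · -- start with a₀ = 0, b₀ = 1, D = -(1/l)
    have hD1 : -t ≤ (-(1 / l)) * (1 - l) := by
      have h2 : (1 - l) / l ≤ t := (div_le_iff₀ hl0).mpr (by linarith)
      have e : (-(1 / l)) * (1 - l) = -((1 - l) / l) := by ring
      rw [e]; linarith
    have hD2 : (-(1 / l)) * (1 - l) ≤ 1 := by
      have : 0 < (1 / l) * (1 - l) := mul_pos (by positivity) h1l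
      nlinarith
    obtain ⟨a, b, ha, hb, heq⟩ := key l t (-(1 / l)) hl0 hl ht0 hA hB hD1 hD2
    set Sa := ∑' n, a n * l ^ n with hSa
    set Sb := ∑' n, b n * l ^ n with hSb
    have hSa0 : 0 ≤ Sa := tsum_digit_nonneg l hl0 a ha
    have hSb0 : 0 ≤ Sb := tsum_digit_nonneg l hl0 b hb
    have hza : (1 - l) * Sa ∈ K := digit_mem l hl0 hl K hKne hKc hK a ha
    have hzb : (1 - l) * Sb ∈ K := digit_mem l hl0 hl K hKne hKc hK b hb
    have h' : l * Sb = -1 + t * (l * Sa) := by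
      rw [heq]; field_simp
    have hy : l * ((1 - l) * Sb) + (1 - l) = t * (l * ((1 - l) * Sa)) := by
      linear_combination (1 - l) * h'
    have hypos : 0 < l * ((1 - l) * Sb) + (1 - l) := by
      nlinarith [mul_nonneg (mul_nonneg hl0.le h1l.le) hSb0]
    have hxpos : 0 < l * ((1 - l) * Sa) := by
      rcases mul_pos_iff.mp (hy ▸ hypos) with ⟨-, h⟩ | ⟨h, -⟩
      · exact h
      · linarith
    exact ⟨l * ((1 - l) * Sa), mapK0 l K hK hza,
           l * ((1 - l) * Sb) + (1 - l), mapK1 l K hK hzb, hxpos, hypos, hy⟩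

open Set

set_option maxHeartbeats 1000000 in
/-- Scaled copies of the attractor `K` of `{λx, λx + (1-λ)}`, `1/3 ≤ λ < (3-√5)/2`,
by `e`, `π`, `1` and `√2` pairwise intersect as stated. -/
theorem scaled_self_similar_sets_intersect
    (l : ℝ) (hl0 : 0 < l) (hl : l < 1 / 2)
    (hl1 : 1 / 3 ≤ l) (hl2 : l < (3 - Real.sqrt 5) / 2)
    (K : Set ℝ) (hKne : K.Nonempty) (hKc : IsCompact K)
    (hK : K = (fun x => l * x) '' K ∪ (fun x => l * x + (1 - l)) '' K) :
    ({w : ℝ | ∃ x ∈ K, x ≠ 0 ∧ w = Real.exp 1 * x} ∩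
      {w : ℝ | ∃ x ∈ K, x ≠ 0 ∧ w = Real.pi * x}).Nonempty ∧
    ({w : ℝ | ∃ x ∈ K, x ≠ 0 ∧ w = Real.exp 1 * x} ∩
      {w : ℝ | ∃ x ∈ K, x ≠ 0 ∧ w = 1 * x}).Nonempty ∧
    ({w : ℝ | ∃ x ∈ K, x ≠ 0 ∧ w = Real.pi * x} ∩
      {w : ℝ | ∃ x ∈ K, x ≠ 0 ∧ w = 1 * x}).Nonempty ∧
    ({w : ℝ | ∃ x ∈ K, x ≠ 0 ∧ w = Real.sqrt 2 * x} ∩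
      {w : ℝ | ∃ x ∈ K, x ≠ 0 ∧ w = 1 * x}).Nonempty := by
  have epos : (0 : ℝ) < Real.exp 1 := Real.exp_pos 1
  have he1 : (2.7182818283 : ℝ) < Real.exp 1 := Real.exp_one_gt_d9
  have he2 : Real.exp 1 < 2.7182818286 := Real.exp_one_lt_d9
  have hpi1 : (3 : ℝ) < Real.pi := Real.pi_gt_three
  have hpi2 : Real.pi < 3.15 := Real.pi_lt_d2
  have hpipos : (0 : ℝ) < Real.pi := by linarith
  have hs_sq : Real.sqrt 2 * Real.sqrt 2 = 2 := Real.mul_self_sqrt (by norm_num)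
  have hs_nn : (0 : ℝ) ≤ Real.sqrt 2 := Real.sqrt_nonneg 2
  have hs_lt : Real.sqrt 2 < 1.5 := by nlinarith
  have hs_gt : (1 : ℝ) < Real.sqrt 2 := by nlinarith
  refine ⟨?_, ?_, ?_, ?_⟩
  · -- e·K ∩ π·K : use t = π / e
    have ht0 : 0 < Real.pi / Real.exp 1 := div_pos hpipos epos
    have htge1 : 1 ≤ Real.pi / Real.exp 1 := by
      rw [le_div_iff₀ epos]; nlinarith
    have htle : Real.pi / Real.exp 1 ≤ 3 := by
      rw [div_le_iff₀ epos]; nlinarith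
    obtain ⟨x, hx, y, hy, hxp, hyp, hxy⟩ := ratio_mem l (Real.pi / Real.exp 1)
      hl0 hl ht0 (by nlinarith) (by nlinarith)
      (Or.inl ⟨by nlinarith, by rw [div_mul_eq_mul_div, div_le_one epos]; nlinarith⟩)
      K hKne hKc hK
    refine ⟨Real.exp 1 * y, ⟨y, hy, hyp.ne', rfl⟩, ⟨x, hx, hxp.ne', ?_⟩⟩
    rw [hxy]
    field_simp
  · -- e·K ∩ 1·K : use t = e
    obtain ⟨x, hx, y, hy, hxp, hyp, hxy⟩ := ratio_mem l (Real.exp 1)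
      hl0 hl epos (by nlinarith) (by nlinarith)
      (Or.inr (by nlinarith)) K hKne hKc hK
    exact ⟨Real.exp 1 * x, ⟨x, hx, hxp.ne', rfl⟩, ⟨y, hy, hyp.ne', by rw [hxy]; ring⟩⟩
  · -- π·K ∩ 1·K : use t = π * l
    have ht0 : 0 < Real.pi * l := mul_pos hpipos hl0
    obtain ⟨x, hx, y, hy, hxp, hyp, hxy⟩ := ratio_mem l (Real.pi * l)
      hl0 hl ht0 (by nlinarith [sq_nonneg (l - 1/3)]) (by nlinarith [sq_nonneg (4*l - 1)])
      (Or.inl ⟨by nlinarith, by nlinarith [sq_nonneg (2*l - 1)]⟩) K hKne hKc hK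
    refine ⟨Real.pi * (l * x), ⟨l * x, mapK0 l K hK hx, (mul_pos hl0 hxp).ne', rfl⟩,
      ⟨y, hy, hyp.ne', by rw [hxy]; ring⟩⟩
  · -- √2·K ∩ 1·K : use t = √2
    have ht0 : (0 : ℝ) < Real.sqrt 2 := by linarith
    obtain ⟨x, hx, y, hy, hxp, hyp, hxy⟩ := ratio_mem l (Real.sqrt 2)
      hl0 hl ht0 (by nlinarith) (by nlinarith)
      (Or.inl ⟨by nlinarith, by nlinarith⟩) K hKne hKc hK
    exact ⟨Real.sqrt 2 * x, ⟨x, hx, hxp.ne', rfl⟩, ⟨y, hy, hyp.ne', by rw [hxy]; ring⟩⟩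
end

section
/- Let C be the middle-third Cantor set and let J = [0, 1/9] ∩ C. Then J + C = {x + y : x ∈ J, y ∈ C} = [0, 4/9] ∪ [2/3, 10/9]. -/
open Set Pointwise

lemma preCantorSet_succ_subset (n : ℕ) : preCantorSet (n + 1) ⊆ preCantorSet n := by
  induction n with
  | zero =>
    rintro x (⟨y, hy, rfl⟩ | ⟨y, hy, rfl⟩) <;>
      exact ⟨by simp at hy ⊢; linarith [hy.1, hy.2], by simp at hy ⊢; linarith [hy.1, hy.2]⟩
  | succ n ih =>
    rintro x (⟨y, hy, rfl⟩ | ⟨y, hy, rfl⟩)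
    · exact Or.inl ⟨y, ih hy, rfl⟩
    · exact Or.inr ⟨y, ih hy, rfl⟩

lemma preCantorSet_subset_unitInterval' (n : ℕ) : preCantorSet n ⊆ Set.Icc 0 1 := by
  induction n with
  | zero => exact le_refl _
  | succ n ih => exact (preCantorSet_succ_subset n).trans ih

lemma cantorSet_eq :
    cantorSet = (· / 3) '' cantorSet ∪ (fun x ↦ (2 + x) / 3) '' cantorSet := by
  ext x
  constructor
  · intro hx
    have hxmem : ∀ n, x ∈ preCantorSet n := Set.mem_iInter.mp hx
    by_cases hcase : x < 2 / 3
    · left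
      refine ⟨3 * x, Set.mem_iInter.mpr fun n ↦ ?_, by ring⟩
      rcases hxmem (n + 1) with ⟨y, hy, hxy⟩ | ⟨y, hy, hxy⟩
      · have : y = 3 * x := by dsimp at hxy; linarith
        rwa [← this]
      · have hy0 := (preCantorSet_subset_unitInterval' n hy).1
        dsimp at hxy; linarith
    · right
      push_neg at hcase
      refine ⟨3 * x - 2, Set.mem_iInter.mpr fun n ↦ ?_, by ring⟩
      rcases hxmem (n + 1) with ⟨y, hy, hxy⟩ | ⟨y, hy, hxy⟩
      · have hy1 := (preCantorSet_subset_unitInterval' n hy).2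
        dsimp at hxy; linarith
      · have : y = 3 * x - 2 := by dsimp at hxy; linarith
        rwa [← this]
  · rintro (⟨y, hy, rfl⟩ | ⟨y, hy, rfl⟩) <;>
    · refine Set.mem_iInter.mpr fun n ↦ ?_
      match n with
      | 0 =>
        have := cantorSet_subset_unitInterval hy
        constructor <;> (simp at this ⊢; try constructor) <;> linarith [this.1, this.2]
      | n + 1 =>
        first
        | exact Or.inl ⟨y, Set.mem_iInter.mp hy n, rfl⟩
        | exact Or.inr ⟨y, Set.mem_iInter.mp hy n, rfl⟩

lemma exists_sum_preCantorSet {z : ℝ} (hz : z ∈ Set.Icc (0:ℝ) 2) (n : ℕ) :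
    ∃ x ∈ preCantorSet n, ∃ y ∈ preCantorSet n, x + y = z := by
  induction n generalizing z with
  | zero =>
    exact ⟨z / 2, ⟨by linarith [hz.1], by linarith [hz.2]⟩,
      z / 2, ⟨by linarith [hz.1], by linarith [hz.2]⟩, by ring⟩
  | succ n ih =>
    rcases le_or_gt z (2/3) with h | h
    · obtain ⟨x, hx, y, hy, hxy⟩ := ih (z := 3 * z) ⟨by linarith [hz.1], by linarith⟩
      exact ⟨x / 3, Or.inl ⟨x, hx, rfl⟩, y / 3, Or.inl ⟨y, hy, rfl⟩, by linarith⟩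
    · rcases le_or_gt z (4/3) with h2 | h2
      · obtain ⟨x, hx, y, hy, hxy⟩ := ih (z := 3 * z - 2) ⟨by linarith, by linarith⟩
        exact ⟨x / 3, Or.inl ⟨x, hx, rfl⟩, (2 + y) / 3, Or.inr ⟨y, hy, rfl⟩, by linarith⟩
      · obtain ⟨x, hx, y, hy, hxy⟩ := ih (z := 3 * z - 4) ⟨by linarith, by linarith [hz.2]⟩
        exact ⟨(2 + x) / 3, Or.inr ⟨x, hx, rfl⟩, (2 + y) / 3, Or.inr ⟨y, hy, rfl⟩,
          by linarith⟩

lemma cantorSet_add_cantorSet : cantorSet + cantorSet = Set.Icc (0:ℝ) 2 := by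
  apply Set.Subset.antisymm
  · rintro z ⟨x, hx, y, hy, rfl⟩
    obtain ⟨hx0, hx1⟩ := cantorSet_subset_unitInterval hx
    obtain ⟨hy0, hy1⟩ := cantorSet_subset_unitInterval hy
    exact ⟨by beta_reduce; linarith, by beta_reduce; linarith⟩
  · intro z hz
    set K : ℕ → Set (ℝ × ℝ) :=
      fun n ↦ {p | p.1 ∈ preCantorSet n ∧ p.2 ∈ preCantorSet n ∧ p.1 + p.2 = z} with hK
    have hclosed : ∀ n, IsClosed (K n) := by
      intro n
      have : K n = (Prod.fst ⁻¹' preCantorSet n ∩ Prod.snd ⁻¹' preCantorSet n) ∩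
          {p : ℝ × ℝ | p.1 + p.2 = z} := by
        ext p; simp [hK, and_assoc]
      rw [this]
      exact (((isClosed_preCantorSet n).preimage continuous_fst).inter
        ((isClosed_preCantorSet n).preimage continuous_snd)).inter
        (isClosed_eq (continuous_fst.add continuous_snd) continuous_const)
    have hsub : ∀ n, K (n + 1) ⊆ K n := by
      rintro n ⟨a, b⟩ ⟨h1, h2, h3⟩
      exact ⟨preCantorSet_succ_subset n h1, preCantorSet_succ_subset n h2, h3⟩
    have hne : ∀ n, (K n).Nonempty := by
      intro n
      obtain ⟨x, hx, y, hy, hxy⟩ := exists_sum_preCantorSet hz n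
      exact ⟨(x, y), hx, hy, hxy⟩
    have hcpt : IsCompact (K 0) := by
      apply (isCompact_Icc.prod isCompact_Icc :
        IsCompact (Set.Icc (0:ℝ) 1 ×ˢ Set.Icc (0:ℝ) 1)).of_isClosed_subset (hclosed 0)
      rintro ⟨a, b⟩ ⟨h1, h2, _⟩
      exact ⟨preCantorSet_subset_unitInterval' 0 h1, preCantorSet_subset_unitInterval' 0 h2⟩
    obtain ⟨⟨x, y⟩, hp⟩ := IsCompact.nonempty_iInter_of_sequence_nonempty_isCompact_isClosed
      K hsub hne hcpt hclosed
    have hp' : ∀ n, (x, y) ∈ K n := Set.mem_iInter.mp hp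
    exact ⟨x, Set.mem_iInter.mpr fun n ↦ (hp' n).1, y,
      Set.mem_iInter.mpr fun n ↦ (hp' n).2.1, (hp' 0).2.2⟩

lemma third_image_add (A B : Set ℝ) :
    (· / 3) '' A + (· / 3) '' B = (· / 3) '' (A + B) := by
  ext z
  constructor
  · rintro ⟨_, ⟨a, ha, rfl⟩, _, ⟨b, hb, rfl⟩, rfl⟩
    exact ⟨a + b, ⟨a, ha, b, hb, rfl⟩, by beta_reduce; ring⟩
  · rintro ⟨_, ⟨a, ha, b, hb, rfl⟩, rfl⟩
    exact ⟨a / 3, ⟨a, ha, rfl⟩, b / 3, ⟨b, hb, rfl⟩, by beta_reduce; ring⟩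

lemma third_image_add' (A B : Set ℝ) :
    (· / 3) '' A + (fun x ↦ (2 + x) / 3) '' B = (fun x ↦ (2 + x) / 3) '' (A + B) := by
  ext z
  constructor
  · rintro ⟨_, ⟨a, ha, rfl⟩, _, ⟨b, hb, rfl⟩, rfl⟩
    exact ⟨a + b, ⟨a, ha, b, hb, rfl⟩, by beta_reduce; ring⟩
  · rintro ⟨_, ⟨a, ha, b, hb, rfl⟩, rfl⟩
    exact ⟨a / 3, ⟨a, ha, rfl⟩, (2 + b) / 3, ⟨b, hb, rfl⟩, by beta_reduce; ring⟩

lemma third_image_Icc (a b : ℝ) : (· / 3) '' Set.Icc a b = Set.Icc (a / 3) (b / 3) := by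
  ext x
  constructor
  · rintro ⟨y, ⟨h1, h2⟩, rfl⟩
    exact ⟨by linarith, by linarith⟩
  · rintro ⟨h1, h2⟩
    exact ⟨3 * x, ⟨by linarith, by linarith⟩, by beta_reduce; ring⟩

lemma third_image_Icc' (a b : ℝ) :
    (fun x ↦ (2 + x) / 3) '' Set.Icc a b = Set.Icc ((2 + a) / 3) ((2 + b) / 3) := by
  ext x
  constructor
  · rintro ⟨y, ⟨h1, h2⟩, rfl⟩
    exact ⟨by beta_reduce; linarith, by beta_reduce; linarith⟩
  · rintro ⟨h1, h2⟩
    exact ⟨3 * x - 2, ⟨by linarith, by linarith⟩, by beta_reduce; ring⟩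

lemma third_cantor_add_cantor :
    (· / 3) '' cantorSet + cantorSet = Set.Icc (0:ℝ) (4/3) := by
  nth_rewrite 2 [cantorSet_eq]
  rw [Set.add_union, third_image_add, third_image_add', cantorSet_add_cantorSet,
    third_image_Icc, third_image_Icc']
  norm_num

lemma inter_third : Set.Icc (0:ℝ) (1/3) ∩ cantorSet = (· / 3) '' cantorSet := by
  nth_rewrite 1 [cantorSet_eq]
  apply Set.Subset.antisymm
  · rintro x ⟨⟨hx0, hx1⟩, ⟨y, hy, rfl⟩ | ⟨y, hy, rfl⟩⟩
    · exact ⟨y, hy, rfl⟩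
    · have := (cantorSet_subset_unitInterval hy).1
      exfalso; beta_reduce at hx1; linarith
  · rintro x ⟨y, hy, rfl⟩
    obtain ⟨hy0, hy1⟩ := cantorSet_subset_unitInterval hy
    exact ⟨⟨by linarith, by linarith⟩, Or.inl ⟨y, hy, rfl⟩⟩

lemma inter_ninth :
    Set.Icc (0:ℝ) (1/9) ∩ cantorSet = (· / 3) '' ((· / 3) '' cantorSet) := by
  have h1 : Set.Icc (0:ℝ) (1/9) ∩ cantorSet
      = Set.Icc (0:ℝ) (1/9) ∩ (Set.Icc (0:ℝ) (1/3) ∩ cantorSet) := by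
    rw [← Set.inter_assoc, Set.Icc_inter_Icc]
    norm_num
  rw [h1, inter_third]
  have h2 : Set.Icc (0:ℝ) (1/9) ∩ ((· / 3) '' cantorSet)
      = (· / 3) '' (Set.Icc (0:ℝ) (1/3) ∩ cantorSet) := by
    apply Set.Subset.antisymm
    · rintro x ⟨⟨hx0, hx1⟩, y, hy, rfl⟩
      exact ⟨y, ⟨⟨(cantorSet_subset_unitInterval hy).1, by beta_reduce at hx1; linarith⟩, hy⟩, rfl⟩
    · rintro x ⟨y, ⟨⟨hy0, hy1⟩, hy⟩, rfl⟩
      exact ⟨⟨by beta_reduce; linarith, by beta_reduce; linarith⟩, y, hy, rfl⟩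
  rw [h2, inter_third]

/-- For `J = [0, 1/9] ∩ C`, where `C` is the middle-third Cantor set,
`J + C = [0, 4/9] ∪ [2/3, 10/9]`. -/
theorem sum_of_cantorSet_piece_and_cantorSet :
    {z : ℝ | ∃ x ∈ Set.Icc (0 : ℝ) (1 / 9) ∩ cantorSet, ∃ y ∈ cantorSet, x + y = z}
      = Set.Icc (0 : ℝ) (4 / 9) ∪ Set.Icc (2 / 3 : ℝ) (10 / 9) := by
  have hset : {z : ℝ | ∃ x ∈ Set.Icc (0 : ℝ) (1 / 9) ∩ cantorSet, ∃ y ∈ cantorSet, x + y = z}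
      = (Set.Icc (0 : ℝ) (1 / 9) ∩ cantorSet) + cantorSet := by
    ext z
    simp [Set.mem_add]
  rw [hset, inter_ninth]
  nth_rewrite 2 [cantorSet_eq]
  rw [Set.add_union, third_image_add, third_image_add', third_cantor_add_cantor,
    third_image_Icc, third_image_Icc']
  norm_num
end
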